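/- arXiv:1908.10665 — 7 statements merged into one kernel-verified Lean document; each statement's English description precedes it below -/
import Mathlib

section
/- Let G be a group, I and Λ nonempty sets, P : Λ × I → G a matrix, and S = M[G;I,Λ;P] the associated Rees matrix semigroup, equipped with its unary operation x ↦ x' (the inverse of x in its maximal subgroup). Then S is finitely generated as a unary semigroup — i.e. there is a finite subset X ⊆ S whose closure under multiplication and x ↦ x' is all of S — if and only if G is a finitely generated group and both I and Λ are finite. -/
section CSDefs

variable {S : Type*}

/-- Closure of a subset under a binary operation `op` and a unary operation `star`. -/
inductive CSClosure (op : S → S → S) (star : S → S) (X : Set S) : S → Prop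
  | base {x : S} : x ∈ X → CSClosure op star X x
  | mul {x y : S} : CSClosure op star X x → CSClosure op star X y →
      CSClosure op star X (op x y)
  | inv {x : S} : CSClosure op star X x → CSClosure op star X (star x)

/-- Homogeneity as a completely simple semigroup, for the completely simple semigroup with
carrier `S`, multiplication `op` and unary operation `star` (inversion in the maximal
subgroup): every multiplication-preserving bijection between finitely generated
`(op, star)`-closed subsemigroups extends to an automorphism of `S`. -/
def IsCSHomogeneous (op : S → S → S) (star : S → S) : Prop :=
  ∀ (X Y : Finset S) (φ : S → S),
    Set.BijOn φ {s | CSClosure op star (X : Set S) s} {s | CSClosure op star (Y : Set S) s} →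
    (∀ x y : S, CSClosure op star (X : Set S) x → CSClosure op star (X : Set S) y →
      φ (op x y) = op (φ x) (φ y)) →
    ∃ Φ : S → S, Function.Bijective Φ ∧
      (∀ x y : S, Φ (op x y) = op (Φ x) (Φ y)) ∧
      ∀ x : S, CSClosure op star (X : Set S) x → Φ x = φ x

end CSDefs

/-- A countable group is homogeneous if every isomorphism between finitely generated
subgroups extends to an automorphism. -/
def IsHomogeneousGroup (G : Type*) [Group G] : Prop :=
  ∀ (A B : Subgroup G), A.FG → B.FG → ∀ e : A ≃* B,
    ∃ Φ : G ≃* G, ∀ a : A, Φ (a : G) = ((e a : B) : G)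

section Rees

variable {G H I Λ J M : Type*} [Group G] [Group H]

/-- Multiplication of the Rees matrix semigroup `M[G;I,Λ;P]`. -/
def reesMul (P : Λ → I → G) (x y : I × G × Λ) : I × G × Λ :=
  (x.1, x.2.1 * P x.2.2 y.1 * y.2.1, y.2.2)

/-- The unary operation on `M[G;I,Λ;P]` sending an element to its inverse in its
maximal subgroup. -/
def reesInv (P : Λ → I → G) (x : I × G × Λ) : I × G × Λ :=
  (x.1, (P x.2.2 x.1)⁻¹ * x.2.1⁻¹ * (P x.2.2 x.1)⁻¹, x.2.2)

/-- The set `G^P` of entries of the sandwich matrix `P`. -/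
def reesEntries (P : Λ → I → G) : Set G := {g | ∃ l i, P l i = g}

/-- The sandwich matrix `P` viewed as a matrix over the subgroup `⟨G^P⟩` generated by its
entries; the Rees matrix semigroup over it is the idempotent-generated subsemigroup
`⟨E(S)⟩ = I × ⟨G^P⟩ × Λ` of `M[G;I,Λ;P]` (for normalised `P`). -/
def reesEntriesMatrix (P : Λ → I → G) : Λ → I → ↥(Subgroup.closure (reesEntries P)) :=
  fun l i => ⟨P l i, Subgroup.subset_closure ⟨l, i, rfl⟩⟩

/-- The map `[θ, ψ, u, v]` between Rees matrix semigroups. -/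
def reesMap (θ : G →* H) (ψI : I → J) (ψΛ : Λ → M) (u : I → H) (v : Λ → H) :
    I × G × Λ → J × H × M :=
  fun x => (ψI x.1, u x.1 * θ x.2.1 * v x.2.2, ψΛ x.2.2)

end Rees

/-- The set `A` forms a characteristic subgroup of `G`: it is a subgroup (contains the
identity and is closed under products and inverses) and is invariant under every
automorphism of `G`. -/
def IsCharacteristicSubgroupSet {G : Type*} [Group G] (A : Set G) : Prop :=
  1 ∈ A ∧ (∀ a ∈ A, ∀ b ∈ A, a * b ∈ A) ∧ (∀ a ∈ A, a⁻¹ ∈ A) ∧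
    ∀ θ : G ≃* G, θ '' A = A

/-- Homogeneity of a complete edge-coloured bipartite graph with left set `L`,
right set `R` and colouring function `F`. -/
def IsHomogeneousBipartite {L R C : Type*} (F : L → R → C) : Prop :=
  ∀ (A : Finset L) (B : Finset R) (α : L → L) (β : R → R),
    Set.InjOn α ↑A → Set.InjOn β ↑B →
    (∀ a ∈ A, ∀ b ∈ B, F (α a) (β b) = F a b) →
    ∃ (α' : Equiv.Perm L) (β' : Equiv.Perm R),
      (∀ a ∈ A, α' a = α a) ∧ (∀ b ∈ B, β' b = β b) ∧
      ∀ (x : L) (y : R), F (α' x) (β' y) = F x y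

/-- A Rees matrix semigroup `M[G;I,Λ;P]` is finitely generated as a
unary semigroup (under multiplication and the operation `x ↦ x'` of inversion in the
maximal subgroup) if and only if `G` is a finitely generated group and both `I` and `Λ`
are finite. -/
theorem rees_fg_iff {G I Λ : Type*} [Group G] [Nonempty I] [Nonempty Λ]
    (P : Λ → I → G) :
    (∃ X : Finset (I × G × Λ),
      ∀ s : I × G × Λ, CSClosure (reesMul P) (reesInv P) (X : Set (I × G × Λ)) s) ↔
    Group.FG G ∧ Finite I ∧ Finite Λ := by
  classical
  obtain ⟨i0⟩ := ‹Nonempty I›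
  obtain ⟨l0⟩ := ‹Nonempty Λ›
  constructor
  · rintro ⟨X, hX⟩
    have hfst : ∀ s, CSClosure (reesMul P) (reesInv P) (X : Set (I × G × Λ)) s →
        s.1 ∈ Prod.fst '' (X : Set (I × G × Λ)) := by
      intro s h
      induction h with
      | base h => exact ⟨_, h, rfl⟩
      | mul hx hy ihx ihy => exact ihx
      | inv hx ih => exact ih
    have hlast : ∀ s, CSClosure (reesMul P) (reesInv P) (X : Set (I × G × Λ)) s →
        s.2.2 ∈ (fun t : I × G × Λ => t.2.2) '' (X : Set (I × G × Λ)) := by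
      intro s h
      induction h with
      | base h => exact ⟨_, h, rfl⟩
      | mul hx hy ihx ihy => exact ihy
      | inv hx ih => exact ih
    have hI : Finite I := by
      rw [← Set.finite_univ_iff]
      exact (X.finite_toSet.image Prod.fst).subset
        (fun i _ => hfst (i, 1, l0) (hX _))
    have hΛ : Finite Λ := by
      rw [← Set.finite_univ_iff]
      exact (X.finite_toSet.image _).subset (fun l _ => hlast (i0, 1, l) (hX _))
    refine ⟨?_, hI, hΛ⟩
    rw [Group.fg_iff]
    refine ⟨(fun t : I × G × Λ => t.2.1) '' (X : Set (I × G × Λ)) ∪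
      Set.range (fun p : Λ × I => P p.1 p.2), ?_, ?_⟩
    · rw [eq_top_iff]
      intro g _
      have key : ∀ s, CSClosure (reesMul P) (reesInv P) (X : Set (I × G × Λ)) s →
          s.2.1 ∈ Subgroup.closure ((fun t : I × G × Λ => t.2.1) '' (X : Set (I × G × Λ)) ∪
            Set.range (fun p : Λ × I => P p.1 p.2)) := by
        intro s h
        induction h with
        | base h => exact Subgroup.subset_closure (Or.inl ⟨_, h, rfl⟩)
        | @mul x y hx hy ihx ihy =>
            have hp : P x.2.2 y.1 ∈ Subgroup.closure
                ((fun t : I × G × Λ => t.2.1) '' (X : Set (I × G × Λ)) ∪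
                  Set.range (fun p : Λ × I => P p.1 p.2)) :=
              Subgroup.subset_closure (Or.inr ⟨(x.2.2, y.1), rfl⟩)
            exact mul_mem (mul_mem ihx hp) ihy
        | @inv x hx ih =>
            have hp : P x.2.2 x.1 ∈ Subgroup.closure
                ((fun t : I × G × Λ => t.2.1) '' (X : Set (I × G × Λ)) ∪
                  Set.range (fun p : Λ × I => P p.1 p.2)) :=
              Subgroup.subset_closure (Or.inr ⟨(x.2.2, x.1), rfl⟩)
            exact mul_mem (mul_mem (inv_mem hp) (inv_mem ih)) (inv_mem hp)
      exact key (i0, g, l0) (hX _)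
    · exact (X.finite_toSet.image _).union (Set.finite_range _)
  · rintro ⟨hG, hI, hΛ⟩
    obtain ⟨A, hAtop, hAfin⟩ := Group.fg_iff.mp hG
    have hE : (Set.range (fun p : Λ × I => P p.1 p.2)).Finite := Set.finite_range _
    set E : Set G := Set.range (fun p : Λ × I => P p.1 p.2) with hEdef
    set T : Set G := ({1} ∪ A ∪ E) ∪ (Inv.inv '' E) with hTdef
    have hTfin : T.Finite := (((Set.finite_singleton 1).union hAfin).union hE).union (hE.image _)
    set Xs : Set (I × G × Λ) := {s | s.2.1 ∈ T} with hXsdef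
    have hXfin : Xs.Finite := by
      have hsub : Xs ⊆ Set.univ ×ˢ (T ×ˢ Set.univ) := by
        intro s hs; exact ⟨trivial, hs, trivial⟩
      exact Set.Finite.subset (Set.Finite.prod Set.finite_univ (hTfin.prod Set.finite_univ)) hsub
    have hbase : ∀ (i : I) (g : G) (l : Λ), g ∈ T →
        CSClosure (reesMul P) (reesInv P) Xs (i, g, l) :=
      fun i g l hg => CSClosure.base hg
    have hPmem : ∀ (l : Λ) (i : I), P l i ∈ T := fun l i => Or.inl (Or.inr ⟨(l, i), rfl⟩)
    have hPinv : ∀ (l : Λ) (i : I), (P l i)⁻¹ ∈ T := fun l i => Or.inr ⟨P l i, ⟨(l, i), rfl⟩, rfl⟩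
    have hone : (1 : G) ∈ T := Or.inl (Or.inl (Or.inl rfl))
    have htrans : ∀ (i : I) (g : G) (l : Λ), CSClosure (reesMul P) (reesInv P) Xs (i, g, l) →
        ∀ (j : I) (m : Λ), CSClosure (reesMul P) (reesInv P) Xs (j, g, m) := by
      intro i g l h j m
      have h1 : CSClosure (reesMul P) (reesInv P) Xs (j, g, l) := by
        have := CSClosure.mul (hbase j ((P l0 i)⁻¹) l0 (hPinv _ _)) h
        simpa [reesMul] using this
      have h2 := CSClosure.mul h1 (hbase i0 ((P l i0)⁻¹) m (hPinv _ _))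
      simpa [reesMul] using h2
    set c : G := P l0 i0 with hcdef
    let K : Subgroup G :=
      { carrier := {h : G | CSClosure (reesMul P) (reesInv P) Xs (i0, h * c⁻¹, l0)}
        one_mem' := by simpa using hbase i0 c⁻¹ l0 (hPinv _ _)
        mul_mem' := by
          intro a b ha hb
          have := CSClosure.mul ha hb
          simpa [reesMul, mul_assoc, hcdef] using this
        inv_mem' := by
          intro a ha
          have := CSClosure.inv ha
          simpa [reesInv, mul_assoc, hcdef] using this }
    have hKmem : ∀ g : G, g ∈ K ↔ CSClosure (reesMul P) (reesInv P) Xs (i0, g * c⁻¹, l0) :=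
      fun g => Iff.rfl
    have hcK : c ∈ K := by
      rw [hKmem]
      simpa using hbase i0 1 l0 hone
    have hKA : A ⊆ (K : Set G) := by
      intro a ha
      have h1 : a * c ∈ K := by
        rw [hKmem]
        simpa using hbase i0 a l0 (Or.inl (Or.inl (Or.inr ha)))
      have h2 := mul_mem h1 (inv_mem hcK)
      simpa using h2
    have hKtop : ∀ g : G, g ∈ K := by
      intro g
      have hle : Subgroup.closure A ≤ K := (Subgroup.closure_le K).mpr hKA
      rw [hAtop] at hle
      exact hle trivial
    refine ⟨hXfin.toFinset, fun s => ?_⟩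
    rw [Set.Finite.coe_toFinset]
    obtain ⟨i, g, l⟩ := s
    have h1 : CSClosure (reesMul P) (reesInv P) Xs (i0, g * c * c⁻¹, l0) :=
      (hKmem (g * c)).mp (hKtop (g * c))
    have h2 : CSClosure (reesMul P) (reesInv P) Xs (i0, g, l0) := by simpa using h1
    exact htrans i0 g l0 h2 i l
end

section
/- Let S = M[G;I,Λ;P] be a normalised Rees matrix semigroup over a countable group G with countable index sets I, Λ, which is homogeneous as a completely simple semigroup, and suppose the set of entries G^P is finite. Then the induced edge-coloured bipartite graph Γ(S) — the complete bipartite graph with left set Λ' = Λ∖{1_Λ}, right set I' = I∖{1_I}, and edge (λ,i) coloured by P(λ,i) — is homogeneous as an edge-coloured bipartite graph. -/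
section AuxBG

variable {G I Λ : Type*} [Group G]

open Classical in
/-- Extension of a partial index map on a pointed set, fixing the base point. -/
private noncomputable def bgExt {Λ : Type*} (lL : Λ)
    (α : {l : Λ // l ≠ lL} → {l : Λ // l ≠ lL}) : Λ → Λ :=
  fun l => if h : l = lL then lL else (α ⟨l, h⟩).1

private lemma bgExt_base {Λ : Type*} (lL : Λ) (α) : bgExt lL α lL = lL := dif_pos rfl

private lemma bgExt_coe {Λ : Type*} (lL : Λ) (α) (a : {l : Λ // l ≠ lL}) :
    bgExt lL α a.1 = (α a).1 := by
  unfold bgExt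
  rw [dif_neg a.2]

private lemma bgExt_ne {Λ : Type*} (lL : Λ) (α) (l : Λ) (h : l ≠ lL) :
    bgExt lL α l ≠ lL := by
  unfold bgExt
  rw [dif_neg h]
  exact (α ⟨l, h⟩).2

private def bgIdx {X : Type*} (x0 : X) (A : Finset {a : X // a ≠ x0}) (x : X) : Prop :=
  x = x0 ∨ ∃ a ∈ A, x = a.1

private lemma rees_first (P : Λ → I → G) (iI : I) (lL : Λ) (h1 : P lL iI = 1)
    (Φ : I × G × Λ → I × G × Λ)
    (hΦ : ∀ x y, Φ (reesMul P x y) = reesMul P (Φ x) (Φ y)) (x : I × G × Λ) :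
    (Φ x).1 = (Φ (x.1, 1, lL)).1 := by
  have hx : x = reesMul P (x.1, 1, lL) (iI, x.2.1, x.2.2) := by
    simp [reesMul, h1]
  conv_lhs => rw [hx, hΦ]
  rfl

private lemma rees_last (P : Λ → I → G) (iI : I) (lL : Λ) (h1 : P lL iI = 1)
    (Φ : I × G × Λ → I × G × Λ)
    (hΦ : ∀ x y, Φ (reesMul P x y) = reesMul P (Φ x) (Φ y)) (x : I × G × Λ) :
    (Φ x).2.2 = (Φ (iI, 1, x.2.2)).2.2 := by
  have hx : x = reesMul P (x.1, x.2.1, lL) (iI, 1, x.2.2) := by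
    simp [reesMul, h1]
  conv_lhs => rw [hx, hΦ]
  rfl

end AuxBG

/-- If a normalised Rees matrix semigroup `S = M[G;I,Λ;P]` (countable
group, countable index sets) is homogeneous as a completely simple semigroup and the
entry set `G^P` is finite, then the induced edge-coloured bipartite graph `Γ(S)` — with
left set `Λ∖{1_Λ}`, right set `I∖{1_I}` and edge `(λ,i)` coloured by `P(λ,i)` — is
homogeneous as an edge-coloured bipartite graph. -/
theorem rees_homogeneous_induced_graph {G I Λ : Type*} [Group G] [Countable G]
    [Countable I] [Countable Λ]
    (P : Λ → I → G) (iI : I) (lL : Λ)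
    (hrow : ∀ j : I, P lL j = 1) (hcol : ∀ m : Λ, P m iI = 1)
    (hhom : IsCSHomogeneous (reesMul P) (reesInv P))
    (hfin : (reesEntries P).Finite) :
    IsHomogeneousBipartite
      (fun (l : {l : Λ // l ≠ lL}) (i : {i : I // i ≠ iI}) => P l.1 i.1) := by

  classical
  intro A B α β hαinj hβinj hF
  have h1 : P lL iI = 1 := hrow iI
  -- the key colour lemma for the extended index maps
  have Pkey : ∀ l, bgIdx lL A l → ∀ i, bgIdx iI B i →
      P (bgExt lL α l) (bgExt iI β i) = P l i := by
    rintro l hl i hi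
    rcases hl with rfl | ⟨a, ha, rfl⟩
    · rw [bgExt_base, hrow, hrow]
    rcases hi with rfl | ⟨b, hb, rfl⟩
    · rw [bgExt_base, hcol, hcol]
    · rw [bgExt_coe, bgExt_coe]
      exact hF a ha b hb
  -- the partial map φ on the Rees semigroup
  set φ : I × G × Λ → I × G × Λ :=
    fun x => (bgExt iI β x.1, x.2.1, bgExt lL α x.2.2) with hφdef
  have mulcomp : ∀ x y : I × G × Λ, bgIdx lL A x.2.2 → bgIdx iI B y.1 →
      φ (reesMul P x y) = reesMul P (φ x) (φ y) := by
    intro x y hx hy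
    simp only [hφdef, reesMul]
    rw [Pkey _ hx _ hy]
  have invcomp : ∀ x : I × G × Λ, bgIdx iI B x.1 → bgIdx lL A x.2.2 →
      φ (reesInv P x) = reesInv P (φ x) := by
    intro x hx1 hx2
    simp only [hφdef, reesInv]
    rw [Pkey _ hx2 _ hx1]
  -- the finite generating set
  set X : Finset (I × G × Λ) :=
    ((hfin.toFinset.image fun g => (iI, g, lL)) ∪
      (B.image fun b => (b.1, (1 : G), lL))) ∪
      (A.image fun a => (iI, (1 : G), a.1)) with hX
  have hXidx : ∀ x ∈ X, bgIdx iI B x.1 ∧ bgIdx lL A x.2.2 := by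
    intro x hx
    simp only [hX, Finset.mem_union, Finset.mem_image,
      Set.Finite.mem_toFinset] at hx
    rcases hx with (⟨g, hg, rfl⟩ | ⟨b, hb, rfl⟩) | ⟨a, ha, rfl⟩
    · exact ⟨Or.inl rfl, Or.inl rfl⟩
    · exact ⟨Or.inr ⟨b, hb, rfl⟩, Or.inl rfl⟩
    · exact ⟨Or.inl rfl, Or.inr ⟨a, ha, rfl⟩⟩
  have hT : ∀ x, CSClosure (reesMul P) (reesInv P) (↑X) x →
      bgIdx iI B x.1 ∧ bgIdx lL A x.2.2 := by
    intro x hx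
    induction hx with
    | base h => exact hXidx _ h
    | mul hx hy ihx ihy => exact ⟨ihx.1, ihy.2⟩
    | inv hx ih => exact ih
  set Y : Finset (I × G × Λ) := X.image φ with hY
  have hmapsto : ∀ x, CSClosure (reesMul P) (reesInv P) (↑X) x →
      CSClosure (reesMul P) (reesInv P) (↑Y) (φ x) := by
    intro x hx
    induction hx with
    | base h => exact CSClosure.base (Finset.mem_coe.2 (Finset.mem_image_of_mem _ h))
    | @mul x y hx hy ihx ihy =>
        rw [mulcomp x y (hT x hx).2 (hT y hy).1]
        exact CSClosure.mul ihx ihy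
    | @inv x hx ih =>
        rw [invcomp x (hT x hx).1 (hT x hx).2]
        exact CSClosure.inv ih
  have hsurj : ∀ y, CSClosure (reesMul P) (reesInv P) (↑Y) y →
      ∃ x, CSClosure (reesMul P) (reesInv P) (↑X) x ∧ φ x = y := by
    intro y hy
    induction hy with
    | base h =>
        obtain ⟨x, hx, rfl⟩ := Finset.mem_image.1 h
        exact ⟨x, CSClosure.base hx, rfl⟩
    | @mul y1 y2 h1 h2 ih1 ih2 =>
        obtain ⟨x1, hx1, rfl⟩ := ih1
        obtain ⟨x2, hx2, rfl⟩ := ih2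
        exact ⟨reesMul P x1 x2, CSClosure.mul hx1 hx2,
          mulcomp x1 x2 (hT x1 hx1).2 (hT x2 hx2).1⟩
    | @inv y1 h1 ih1 =>
        obtain ⟨x1, hx1, rfl⟩ := ih1
        exact ⟨reesInv P x1, CSClosure.inv hx1,
          invcomp x1 (hT x1 hx1).1 (hT x1 hx1).2⟩
  have hβeinj : ∀ i i', bgIdx iI B i → bgIdx iI B i' →
      bgExt iI β i = bgExt iI β i' → i = i' := by
    intro i i' hi hi' h
    rcases hi with hi0 | ⟨b, hb, hb0⟩
    · rcases hi' with hi0' | ⟨b', hb', hb0'⟩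
      · rw [hi0, hi0']
      · exfalso
        rw [hi0, bgExt_base, hb0'] at h
        exact bgExt_ne iI β b'.1 b'.2 h.symm
    · rcases hi' with hi0' | ⟨b', hb', hb0'⟩
      · exfalso
        rw [hi0', bgExt_base, hb0] at h
        exact bgExt_ne iI β b.1 b.2 h
      · rw [hb0, hb0'] at h ⊢
        rw [bgExt_coe, bgExt_coe] at h
        exact congrArg Subtype.val
          (hβinj (Finset.mem_coe.2 hb) (Finset.mem_coe.2 hb') (Subtype.ext h))
  have hαeinj : ∀ l l', bgIdx lL A l → bgIdx lL A l' →
      bgExt lL α l = bgExt lL α l' → l = l' := by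
    intro l l' hl hl' h
    rcases hl with hl0 | ⟨a, ha, ha0⟩
    · rcases hl' with hl0' | ⟨a', ha', ha0'⟩
      · rw [hl0, hl0']
      · exfalso
        rw [hl0, bgExt_base, ha0'] at h
        exact bgExt_ne lL α a'.1 a'.2 h.symm
    · rcases hl' with hl0' | ⟨a', ha', ha0'⟩
      · exfalso
        rw [hl0', bgExt_base, ha0] at h
        exact bgExt_ne lL α a.1 a.2 h
      · rw [ha0, ha0'] at h ⊢
        rw [bgExt_coe, bgExt_coe] at h
        exact congrArg Subtype.val
          (hαinj (Finset.mem_coe.2 ha) (Finset.mem_coe.2 ha') (Subtype.ext h))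
  have hbij : Set.BijOn φ {s | CSClosure (reesMul P) (reesInv P) (↑X) s}
      {s | CSClosure (reesMul P) (reesInv P) (↑Y) s} := by
    refine ⟨fun x hx => hmapsto x hx, ?_, ?_⟩
    · intro x hx y hy h
      have h1' : bgExt iI β x.1 = bgExt iI β y.1 := congrArg Prod.fst h
      have h2' : x.2.1 = y.2.1 := congrArg (fun z => z.2.1) h
      have h3' : bgExt lL α x.2.2 = bgExt lL α y.2.2 := congrArg (fun z => z.2.2) h
      exact Prod.ext (hβeinj _ _ (hT x hx).1 (hT y hy).1 h1')
        (Prod.ext h2' (hαeinj _ _ (hT x hx).2 (hT y hy).2 h3'))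
    · intro y hy
      obtain ⟨x, hx, hxy⟩ := hsurj y hy
      exact ⟨x, hx, hxy⟩
  obtain ⟨Φ, hΦbij, hΦmul, hΦext⟩ := hhom X Y φ hbij
    (fun x y hx hy => mulcomp x y (hT x hx).2 (hT y hy).1)
  set e : (I × G × Λ) ≃ (I × G × Λ) := Equiv.ofBijective Φ hΦbij with he
  have heapp : ∀ z, e z = Φ z := fun z => rfl
  have hinvmul : ∀ x y, e.symm (reesMul P x y) = reesMul P (e.symm x) (e.symm y) := by
    intro x y
    apply e.injective
    rw [e.apply_symm_apply]
    symm
    calc e (reesMul P (e.symm x) (e.symm y))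
        = Φ (reesMul P (e.symm x) (e.symm y)) := rfl
      _ = reesMul P (Φ (e.symm x)) (Φ (e.symm y)) := hΦmul _ _
      _ = reesMul P (e (e.symm x)) (e (e.symm y)) := rfl
      _ = reesMul P x y := by rw [e.apply_symm_apply, e.apply_symm_apply]
  have hfirstΦ := rees_first P iI lL h1 Φ hΦmul
  have hlastΦ := rees_last P iI lL h1 Φ hΦmul
  have hfirstE := rees_first P iI lL h1 e.symm hinvmul
  have hlastE := rees_last P iI lL h1 e.symm hinvmul
  -- the base idempotent is fixed
  have hbasemem : ((iI, (1 : G), lL) : I × G × Λ) ∈ X := by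
    have : (1 : G) ∈ hfin.toFinset := hfin.mem_toFinset.2 ⟨lL, iI, h1⟩
    exact Finset.mem_union.2 (Or.inl (Finset.mem_union.2 (Or.inl
      (Finset.mem_image_of_mem _ this))))
  have hΦbase : Φ (iI, (1 : G), lL) = (iI, (1 : G), lL) := by
    rw [hΦext _ (CSClosure.base (Finset.mem_coe.2 hbasemem))]
    simp only [hφdef]
    rw [bgExt_base, bgExt_base]
  -- the induced index maps
  have hIli : ∀ i : I, (e.symm ((Φ (i, (1 : G), lL)).1, (1 : G), lL)).1 = i := by
    intro i
    have h2 : e.symm (Φ (i, (1 : G), lL)) = (i, (1 : G), lL) :=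
      e.symm_apply_apply (i, (1 : G), lL)
    rw [← hfirstE (Φ (i, (1 : G), lL)), h2]
  have hIri : ∀ i : I, (Φ ((e.symm (i, (1 : G), lL)).1, (1 : G), lL)).1 = i := by
    intro i
    have h2 : Φ (e.symm (i, (1 : G), lL)) = (i, (1 : G), lL) :=
      e.apply_symm_apply (i, (1 : G), lL)
    rw [← hfirstΦ (e.symm (i, (1 : G), lL)), h2]
  have hLli : ∀ l : Λ, (e.symm (iI, (1 : G), (Φ (iI, (1 : G), l)).2.2)).2.2 = l := by
    intro l
    have h2 : e.symm (Φ (iI, (1 : G), l)) = (iI, (1 : G), l) :=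
      e.symm_apply_apply (iI, (1 : G), l)
    rw [← hlastE (Φ (iI, (1 : G), l)), h2]
  have hLri : ∀ l : Λ, (Φ (iI, (1 : G), (e.symm (iI, (1 : G), l)).2.2)).2.2 = l := by
    intro l
    have h2 : Φ (e.symm (iI, (1 : G), l)) = (iI, (1 : G), l) :=
      e.apply_symm_apply (iI, (1 : G), l)
    rw [← hlastΦ (e.symm (iI, (1 : G), l)), h2]
  set eI : Equiv.Perm I :=
    { toFun := fun i => (Φ (i, (1 : G), lL)).1,
      invFun := fun i => (e.symm (i, (1 : G), lL)).1,
      left_inv := hIli, right_inv := hIri } with heI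
  set eL : Equiv.Perm Λ :=
    { toFun := fun l => (Φ (iI, (1 : G), l)).2.2,
      invFun := fun l => (e.symm (iI, (1 : G), l)).2.2,
      left_inv := hLli, right_inv := hLri } with heL
  have heIiI : eI iI = iI := congrArg Prod.fst hΦbase
  have heLlL : eL lL = lL := congrArg (fun z => z.2.2) hΦbase
  -- images of idempotents
  have hid1 : ∀ l : Λ, Φ (iI, (1 : G), l) = (iI, (1 : G), eL l) := by
    intro l
    have hidem : reesMul P (iI, (1 : G), l) (iI, (1 : G), l) = (iI, (1 : G), l) := by
      simp [reesMul, hcol]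
    have h2 : reesMul P (Φ (iI, (1 : G), l)) (Φ (iI, (1 : G), l)) = Φ (iI, (1 : G), l) := by
      rw [← hΦmul, hidem]
    have hy1 : (Φ (iI, (1 : G), l)).1 = iI :=
      (hfirstΦ (iI, (1 : G), l)).trans (congrArg Prod.fst hΦbase)
    have hmid : (Φ (iI, (1 : G), l)).2.1 *
        P (Φ (iI, (1 : G), l)).2.2 (Φ (iI, (1 : G), l)).1 *
        (Φ (iI, (1 : G), l)).2.1 = (Φ (iI, (1 : G), l)).2.1 :=
      congrArg (fun z => z.2.1) h2
    rw [hy1, hcol, mul_one] at hmid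
    have hy2 : (Φ (iI, (1 : G), l)).2.1 = 1 := mul_eq_left.mp hmid
    exact Prod.ext hy1 (Prod.ext hy2 rfl)
  have hid2 : ∀ i : I, Φ (i, (1 : G), lL) = (eI i, (1 : G), lL) := by
    intro i
    have hidem : reesMul P (i, (1 : G), lL) (i, (1 : G), lL) = (i, (1 : G), lL) := by
      simp [reesMul, hrow]
    have h2 : reesMul P (Φ (i, (1 : G), lL)) (Φ (i, (1 : G), lL)) = Φ (i, (1 : G), lL) := by
      rw [← hΦmul, hidem]
    have hy3 : (Φ (i, (1 : G), lL)).2.2 = lL :=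
      (hlastΦ (i, (1 : G), lL)).trans (congrArg (fun z => z.2.2) hΦbase)
    have hmid : (Φ (i, (1 : G), lL)).2.1 *
        P (Φ (i, (1 : G), lL)).2.2 (Φ (i, (1 : G), lL)).1 *
        (Φ (i, (1 : G), lL)).2.1 = (Φ (i, (1 : G), lL)).2.1 :=
      congrArg (fun z => z.2.1) h2
    rw [hy3, hrow, mul_one] at hmid
    have hy2 : (Φ (i, (1 : G), lL)).2.1 = 1 := mul_eq_left.mp hmid
    exact Prod.ext rfl (Prod.ext hy2 hy3)
  -- colour preservation for the induced maps
  have hcolour : ∀ (l : Λ) (i : I), P (eL l) (eI i) = P l i := by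
    intro l i
    have hprod : reesMul P (iI, (1 : G), l) (i, (1 : G), lL) = (iI, P l i, lL) := by
      simp [reesMul]
    have h2 : Φ (iI, P l i, lL) =
        reesMul P (Φ (iI, (1 : G), l)) (Φ (i, (1 : G), lL)) := by
      rw [← hΦmul, hprod]
    rw [hid1 l, hid2 i] at h2
    have hmem : ((iI, P l i, lL) : I × G × Λ) ∈ X := by
      have : P l i ∈ hfin.toFinset := hfin.mem_toFinset.2 ⟨l, i, rfl⟩
      exact Finset.mem_union.2 (Or.inl (Finset.mem_union.2 (Or.inl
        (Finset.mem_image_of_mem _ this))))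
    have h3 : Φ (iI, P l i, lL) = (iI, P l i, lL) := by
      rw [hΦext _ (CSClosure.base (Finset.mem_coe.2 hmem))]
      simp only [hφdef]
      rw [bgExt_base, bgExt_base]
    have h4 : P l i = 1 * P (eL l) (eI i) * 1 :=
      congrArg (fun z => z.2.1) (h3.symm.trans h2)
    simpa using h4.symm
  -- restrict the permutations to the subtypes
  have hneI : ∀ i : I, i ≠ iI ↔ eI i ≠ iI := by
    intro i
    constructor
    · intro h hc
      exact h (eI.injective (hc.trans heIiI.symm))
    · intro h hc
      exact h (by rw [hc, heIiI])
  have hneL : ∀ l : Λ, l ≠ lL ↔ eL l ≠ lL := by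
    intro l
    constructor
    · intro h hc
      exact h (eL.injective (hc.trans heLlL.symm))
    · intro h hc
      exact h (by rw [hc, heLlL])
  refine ⟨Equiv.Perm.subtypePerm eL (fun l => (hneL l).symm), Equiv.Perm.subtypePerm eI (fun i => (hneI i).symm), ?_, ?_, ?_⟩
  · intro a ha
    apply Subtype.ext
    show eL a.1 = (α a).1
    have hmem : ((iI, (1 : G), a.1) : I × G × Λ) ∈ X :=
      Finset.mem_union.2 (Or.inr (Finset.mem_image_of_mem _ ha))
    have h3 : (Φ (iI, (1 : G), a.1)).2.2 = bgExt lL α a.1 := by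
      rw [hΦext _ (CSClosure.base (Finset.mem_coe.2 hmem))]
    exact h3.trans (bgExt_coe lL α a)
  · intro b hb
    apply Subtype.ext
    show eI b.1 = (β b).1
    have hmem : ((b.1, (1 : G), lL) : I × G × Λ) ∈ X :=
      Finset.mem_union.2 (Or.inl (Finset.mem_union.2 (Or.inr
        (Finset.mem_image_of_mem _ hb))))
    have h3 : (Φ (b.1, (1 : G), lL)).1 = bgExt iI β b.1 := by
      rw [hΦext _ (CSClosure.base (Finset.mem_coe.2 hmem))]
    exact h3.trans (bgExt_coe iI β b)
  · intro x y
    exact hcolour x.1 y.1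
end

section
/- Let S = M[G;I,Λ;P] be a normalised Rees matrix semigroup over a countable group G with countable index sets I, Λ, which is homogeneous as a completely simple semigroup. Let H be a finite subset of G^P, let J be a finite subset of I containing 1_I, and let ψ : J → J be a bijection fixing 1_I. Then there exist bijections σ : I → I extending ψ and τ : Λ → Λ with τ(1_Λ) = 1_Λ such that P(τ(λ), σ(i)) = P(λ,i) for all λ ∈ Λ and i ∈ I with P(λ,i) ∈ H. The dual statement holds for finite subsets of Λ. -/
section ReesAux

variable {G I Λ : Type*} [Group G]

private lemma rees_auto_structure (P : Λ → I → G) (iI : I) (lL : Λ)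
    (hrow : ∀ j : I, P lL j = 1) (hcol : ∀ m : Λ, P m iI = 1)
    (Φ : I × G × Λ → I × G × Λ) (hbij : Function.Bijective Φ)
    (hmul : ∀ x y, Φ (reesMul P x y) = reesMul P (Φ x) (Φ y)) :
    ∃ (σ : Equiv.Perm I) (τ : Equiv.Perm Λ),
      (∀ i, σ i = (Φ (i, 1, lL)).1) ∧ (∀ l, τ l = (Φ (iI, 1, l)).2.2) ∧
      ∀ l i, Φ (iI, P l i, lL) =
        (σ iI, (P (τ l) (σ iI))⁻¹ * P (τ l) (σ i) * (P (τ lL) (σ i))⁻¹, τ lL) := by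
  have h1 : ∀ x y : I × G × Λ, x.1 = y.1 → (Φ x).1 = (Φ y).1 := by
    intro x y hxy
    have : reesMul P x (iI, x.2.1⁻¹ * y.2.1, y.2.2) = y := by
      simp [reesMul, hcol, hxy, mul_assoc]
    rw [← this, hmul]; rfl
  have h1' : ∀ x y : I × G × Λ, (Φ x).1 = (Φ y).1 → x.1 = y.1 := by
    intro x y hxy
    obtain ⟨z, hz⟩ := hbij.2 (iI, (Φ x).2.1⁻¹ * (Φ y).2.1, (Φ y).2.2)
    have hxz : Φ (reesMul P x z) = Φ y := by
      rw [hmul, hz]; simp [reesMul, hcol, hxy, mul_assoc]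
    have := hbij.1 hxz
    rw [← this]; rfl
  have h3 : ∀ x y : I × G × Λ, x.2.2 = y.2.2 → (Φ x).2.2 = (Φ y).2.2 := by
    intro x y hxy
    have : reesMul P (y.1, y.2.1 * x.2.1⁻¹, lL) x = y := by
      simp [reesMul, hrow, hxy, mul_assoc]
    rw [← this, hmul]; rfl
  have h3' : ∀ x y : I × G × Λ, (Φ x).2.2 = (Φ y).2.2 → x.2.2 = y.2.2 := by
    intro x y hxy
    obtain ⟨z, hz⟩ := hbij.2 ((Φ y).1, (Φ y).2.1 * (Φ x).2.1⁻¹, lL)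
    have hxz : Φ (reesMul P z x) = Φ y := by
      rw [hmul, hz]; simp [reesMul, hrow, hxy, mul_assoc]
    have := hbij.1 hxz
    rw [← this]; rfl
  have hσbij : Function.Bijective (fun i : I => (Φ (i, 1, lL)).1) := by
    constructor
    · intro i i' h
      exact h1' (i, (1:G), lL) (i', 1, lL) h
    · intro k
      obtain ⟨x, hx⟩ := hbij.2 (k, 1, lL)
      refine ⟨x.1, ?_⟩
      have := h1 (x.1, (1:G), lL) x rfl
      rw [hx] at this
      simpa using this
  have hτbij : Function.Bijective (fun l : Λ => (Φ (iI, 1, l)).2.2) := by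
    constructor
    · intro l l' h
      exact h3' (iI, (1:G), l) (iI, 1, l') h
    · intro m
      obtain ⟨x, hx⟩ := hbij.2 (iI, 1, m)
      refine ⟨x.2.2, ?_⟩
      have := h3 (iI, (1:G), x.2.2) x rfl
      rw [hx] at this
      simpa using this
  refine ⟨Equiv.ofBijective _ hσbij, Equiv.ofBijective _ hτbij, fun i => rfl, fun l => rfl, ?_⟩
  intro l i
  have idem : ∀ x : I × G × Λ, reesMul P x x = x →
      (Φ x) = ((Φ x).1, (P (Φ x).2.2 (Φ x).1)⁻¹, (Φ x).2.2) := by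
    intro x hx
    have h := hmul x x
    rw [hx] at h
    have h2 : (Φ x).2.1 * P (Φ x).2.2 (Φ x).1 * (Φ x).2.1 = (Φ x).2.1 :=
      congrArg (fun t => t.2.1) h.symm
    have h4 : (Φ x).2.1 * P (Φ x).2.2 (Φ x).1 = 1 :=
      mul_right_cancel (b := (Φ x).2.1) (by rw [one_mul]; exact h2)
    have h5 : (Φ x).2.1 = (P (Φ x).2.2 (Φ x).1)⁻¹ := eq_inv_of_mul_eq_one_left h4
    rw [← h5]
  have ha : reesMul P (iI, (1:G), l) (iI, 1, l) = (iI, 1, l) := by simp [reesMul, hcol]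
  have hb : reesMul P (i, (1:G), lL) (i, 1, lL) = (i, 1, lL) := by simp [reesMul, hrow]
  have hΦa := idem _ ha
  have hΦb := idem _ hb
  have ha1 : (Φ (iI, (1:G), l)).1 = (Φ (iI, (1:G), lL)).1 := h1 _ _ rfl
  have hb3 : (Φ (i, (1:G), lL)).2.2 = (Φ (iI, (1:G), lL)).2.2 := h3 _ _ rfl
  have hab : (iI, P l i, lL) = reesMul P (iI, (1:G), l) (i, 1, lL) := by simp [reesMul]
  rw [hab, hmul, hΦa, hΦb]
  simp only [reesMul, Equiv.ofBijective_apply]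
  rw [ha1, hb3]

variable [DecidableEq G]

private lemma rees_closure_left (P : Λ → I → G) (lL : Λ) (hrow : ∀ j : I, P lL j = 1)
    (Hs : Finset G) (J : Finset I) :
    {s | CSClosure (reesMul P) (reesInv P)
        ((J ×ˢ (insert 1 Hs) ×ˢ ({lL} : Finset Λ) : Finset (I × G × Λ)) : Set (I × G × Λ)) s}
      = {x : I × G × Λ | x.1 ∈ J ∧ x.2.1 ∈ Subgroup.closure (Hs : Set G) ∧ x.2.2 = lL} := by
  ext x
  constructor
  · intro h
    induction h with
    | base hx =>
      rw [Finset.mem_coe, Finset.mem_product, Finset.mem_product] at hx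
      obtain ⟨h1, h2, h3⟩ := hx
      rw [Finset.mem_insert] at h2
      refine ⟨h1, ?_, by simpa using h3⟩
      rcases h2 with h2 | h2
      · rw [h2]; exact one_mem _
      · exact Subgroup.subset_closure h2
    | mul hx hy ihx ihy =>
      refine ⟨ihx.1, ?_, ihy.2.2⟩
      show _ * P _ _ * _ ∈ _
      rw [ihx.2.2, hrow, mul_one]
      exact mul_mem ihx.2.1 ihy.2.1
    | inv hx ihx =>
      refine ⟨ihx.1, ?_, ihx.2.2⟩
      show (P _ _)⁻¹ * _⁻¹ * (P _ _)⁻¹ ∈ _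
      rw [ihx.2.2, hrow]
      simpa using inv_mem ihx.2.1
  · rintro ⟨h1, h2, h3⟩
    obtain ⟨j, g, m⟩ := x
    simp only at h1 h2 h3
    subst h3
    induction h2 using Subgroup.closure_induction with
    | mem g hg =>
      exact CSClosure.base (by
        rw [Finset.mem_coe, Finset.mem_product, Finset.mem_product]
        exact ⟨h1, Finset.mem_insert_of_mem hg, Finset.mem_singleton_self _⟩)
    | one =>
      exact CSClosure.base (by
        rw [Finset.mem_coe, Finset.mem_product, Finset.mem_product]
        exact ⟨h1, Finset.mem_insert_self _ _, Finset.mem_singleton_self _⟩)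
    | mul a b _ _ pa pb =>
      have := CSClosure.mul pa pb
      simpa [reesMul, hrow] using this
    | inv a _ pa =>
      have := CSClosure.inv pa
      simpa [reesInv, hrow] using this

private lemma rees_closure_right (P : Λ → I → G) (iI : I) (hcol : ∀ m : Λ, P m iI = 1)
    (Hs : Finset G) (Ms : Finset Λ) :
    {s | CSClosure (reesMul P) (reesInv P)
        ((({iI} : Finset I) ×ˢ (insert 1 Hs) ×ˢ Ms : Finset (I × G × Λ)) : Set (I × G × Λ)) s}
      = {x : I × G × Λ | x.1 = iI ∧ x.2.1 ∈ Subgroup.closure (Hs : Set G) ∧ x.2.2 ∈ Ms} := by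
  ext x
  constructor
  · intro h
    induction h with
    | base hx =>
      rw [Finset.mem_coe, Finset.mem_product, Finset.mem_product] at hx
      obtain ⟨h1, h2, h3⟩ := hx
      rw [Finset.mem_insert] at h2
      refine ⟨by simpa using h1, ?_, h3⟩
      rcases h2 with h2 | h2
      · rw [h2]; exact one_mem _
      · exact Subgroup.subset_closure h2
    | mul hx hy ihx ihy =>
      refine ⟨ihx.1, ?_, ihy.2.2⟩
      show _ * P _ _ * _ ∈ _
      rw [ihy.1, hcol, mul_one]
      exact mul_mem ihx.2.1 ihy.2.1
    | inv hx ihx =>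
      refine ⟨ihx.1, ?_, ihx.2.2⟩
      show (P _ _)⁻¹ * _⁻¹ * (P _ _)⁻¹ ∈ _
      rw [ihx.1, hcol]
      simpa using inv_mem ihx.2.1
  · rintro ⟨h1, h2, h3⟩
    obtain ⟨j, g, m⟩ := x
    simp only at h1 h2 h3
    subst h1
    induction h2 using Subgroup.closure_induction with
    | mem g hg =>
      exact CSClosure.base (by
        rw [Finset.mem_coe, Finset.mem_product, Finset.mem_product]
        exact ⟨Finset.mem_singleton_self _, Finset.mem_insert_of_mem hg, h3⟩)
    | one =>
      exact CSClosure.base (by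
        rw [Finset.mem_coe, Finset.mem_product, Finset.mem_product]
        exact ⟨Finset.mem_singleton_self _, Finset.mem_insert_self _ _, h3⟩)
    | mul a b _ _ pa pb =>
      have := CSClosure.mul pa pb
      simpa [reesMul, hcol] using this
    | inv a _ pa =>
      have := CSClosure.inv pa
      simpa [reesInv, hcol] using this

end ReesAux

/-- Let `S = M[G;I,Λ;P]` be a normalised Rees matrix semigroup (countable
group, countable index sets) which is homogeneous as a completely simple semigroup.
For every finite subset `H ⊆ G^P`, every finite `J ⊆ I` containing `1_I` and every
bijection `ψ` of `J` fixing `1_I`, there are bijections `σ` of `I` extending `ψ` and `τ`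
of `Λ` fixing `1_Λ` with `P(τ(λ), σ(i)) = P(λ,i)` whenever `P(λ,i) ∈ H`; dually for
finite subsets of `Λ`. -/
theorem rees_homogeneous_extend_column_bijection {G I Λ : Type*} [Group G] [Countable G]
    [Countable I] [Countable Λ]
    (P : Λ → I → G) (iI : I) (lL : Λ)
    (hrow : ∀ j : I, P lL j = 1) (hcol : ∀ m : Λ, P m iI = 1)
    (hhom : IsCSHomogeneous (reesMul P) (reesInv P)) :
    (∀ Hs : Finset G, (Hs : Set G) ⊆ reesEntries P →
      ∀ J : Finset I, iI ∈ J →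
      ∀ ψ : I → I, Set.BijOn ψ (J : Set I) (J : Set I) → ψ iI = iI →
        ∃ (σ : Equiv.Perm I) (τ : Equiv.Perm Λ),
          (∀ j ∈ J, σ j = ψ j) ∧ τ lL = lL ∧
          ∀ (l : Λ) (i : I), P l i ∈ Hs → P (τ l) (σ i) = P l i) ∧
    (∀ Hs : Finset G, (Hs : Set G) ⊆ reesEntries P →
      ∀ Ms : Finset Λ, lL ∈ Ms →
      ∀ ψ : Λ → Λ, Set.BijOn ψ (Ms : Set Λ) (Ms : Set Λ) → ψ lL = lL →
        ∃ (τ : Equiv.Perm Λ) (σ : Equiv.Perm I),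
          (∀ m ∈ Ms, τ m = ψ m) ∧ σ iI = iI ∧
          ∀ (l : Λ) (i : I), P l i ∈ Hs → P (τ l) (σ i) = P l i) := by
  classical
  constructor
  · -- column (index set I) version
    intro Hs _ J hiIJ ψ hψ hψiI
    set C : Set (I × G × Λ) :=
      {x | x.1 ∈ J ∧ x.2.1 ∈ Subgroup.closure (Hs : Set G) ∧ x.2.2 = lL} with hCdef
    have hclos := rees_closure_left P lL hrow Hs J
    set φ : I × G × Λ → I × G × Λ := fun x => (ψ x.1, x.2.1, x.2.2) with hφ
    have hbijOn : Set.BijOn φ C C := by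
      refine ⟨fun x hx => ⟨hψ.mapsTo hx.1, hx.2⟩, ?_, ?_⟩
      · intro x hx y hy hxy
        simp only [hφ, Prod.mk.injEq] at hxy
        exact Prod.ext (hψ.injOn hx.1 hy.1 hxy.1) (Prod.ext hxy.2.1 hxy.2.2)
      · rintro ⟨y1, y2, y3⟩ hy
        obtain ⟨j, hjJ, hj⟩ := hψ.surjOn hy.1
        refine ⟨(j, y2, y3), ⟨hjJ, hy.2⟩, ?_⟩
        simp only [hφ]
        rw [hj]
    have hmem : ∀ z : I × G × Λ,
        CSClosure (reesMul P) (reesInv P)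
          ((J ×ˢ (insert 1 Hs) ×ˢ ({lL} : Finset Λ) : Finset (I × G × Λ)) : Set (I × G × Λ)) z
          ↔ z ∈ C := fun z => Set.ext_iff.mp hclos z
    obtain ⟨Φ, hΦbij, hΦmul, hΦext⟩ :=
      hhom (J ×ˢ (insert 1 Hs) ×ˢ ({lL} : Finset Λ))
        (J ×ˢ (insert 1 Hs) ×ˢ ({lL} : Finset Λ)) φ
        (by rw [hclos]; exact hbijOn)
        (by
          intro x y hx hy
          have hx' := (hmem x).mp hx
          simp [hφ, reesMul, hx'.2.2, hrow])
    obtain ⟨σ, τ, hσ, hτ, hkey⟩ := rees_auto_structure P iI lL hrow hcol Φ hΦbij hΦmul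
    have hext : ∀ x ∈ C, Φ x = φ x := fun x hx => hΦext x ((hmem x).mpr hx)
    have hσJ : ∀ j ∈ J, σ j = ψ j := by
      intro j hj
      rw [hσ j, hext (j, 1, lL) ⟨hj, one_mem _, rfl⟩]
    have hσiI : σ iI = iI := by rw [hσJ iI hiIJ, hψiI]
    have hτlL : τ lL = lL := by
      rw [hτ lL, hext (iI, 1, lL) ⟨hiIJ, one_mem _, rfl⟩]
    refine ⟨σ, τ, hσJ, hτlL, ?_⟩
    intro l i hPH
    have h1 := hkey l i
    rw [hext (iI, P l i, lL) ⟨hiIJ, Subgroup.subset_closure hPH, rfl⟩] at h1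
    rw [hσiI, hτlL, hcol, hrow] at h1
    have h2 := congrArg (fun t : I × G × Λ => t.2.1) h1
    simpa [hφ] using h2.symm
  · -- row (index set Λ) version
    intro Hs _ Ms hlLMs ψ hψ hψlL
    set C : Set (I × G × Λ) :=
      {x | x.1 = iI ∧ x.2.1 ∈ Subgroup.closure (Hs : Set G) ∧ x.2.2 ∈ Ms} with hCdef
    have hclos := rees_closure_right P iI hcol Hs Ms
    set φ : I × G × Λ → I × G × Λ := fun x => (x.1, x.2.1, ψ x.2.2) with hφ
    have hbijOn : Set.BijOn φ C C := by
      refine ⟨fun x hx => ⟨hx.1, hx.2.1, hψ.mapsTo hx.2.2⟩, ?_, ?_⟩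
      · intro x hx y hy hxy
        simp only [hφ, Prod.mk.injEq] at hxy
        exact Prod.ext hxy.1 (Prod.ext hxy.2.1 (hψ.injOn hx.2.2 hy.2.2 hxy.2.2))
      · rintro ⟨y1, y2, y3⟩ hy
        obtain ⟨m, hmMs, hm⟩ := hψ.surjOn hy.2.2
        refine ⟨(y1, y2, m), ⟨hy.1, hy.2.1, hmMs⟩, ?_⟩
        simp only [hφ]
        rw [hm]
    have hmem : ∀ z : I × G × Λ,
        CSClosure (reesMul P) (reesInv P)
          ((({iI} : Finset I) ×ˢ (insert 1 Hs) ×ˢ Ms : Finset (I × G × Λ)) : Set (I × G × Λ)) z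
          ↔ z ∈ C := fun z => Set.ext_iff.mp hclos z
    obtain ⟨Φ, hΦbij, hΦmul, hΦext⟩ :=
      hhom (({iI} : Finset I) ×ˢ (insert 1 Hs) ×ˢ Ms)
        (({iI} : Finset I) ×ˢ (insert 1 Hs) ×ˢ Ms) φ
        (by rw [hclos]; exact hbijOn)
        (by
          intro x y hx hy
          have hy' := (hmem y).mp hy
          simp [hφ, reesMul, hy'.1, hcol])
    obtain ⟨σ, τ, hσ, hτ, hkey⟩ := rees_auto_structure P iI lL hrow hcol Φ hΦbij hΦmul
    have hext : ∀ x ∈ C, Φ x = φ x := fun x hx => hΦext x ((hmem x).mpr hx)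
    have hτMs : ∀ m ∈ Ms, τ m = ψ m := by
      intro m hm
      rw [hτ m, hext (iI, 1, m) ⟨rfl, one_mem _, hm⟩]
    have hτlL : τ lL = lL := by rw [hτMs lL hlLMs, hψlL]
    have hσiI : σ iI = iI := by
      rw [hσ iI, hext (iI, 1, lL) ⟨rfl, one_mem _, hlLMs⟩]
    refine ⟨τ, σ, hτMs, hσiI, ?_⟩
    intro l i hPH
    have h1 := hkey l i
    rw [hext (iI, P l i, lL) ⟨rfl, Subgroup.subset_closure hPH, hlLMs⟩] at h1
    rw [hσiI, hτlL, hcol, hrow] at h1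
    have h2 := congrArg (fun t : I × G × Λ => t.2.1) h1
    simpa [hφ, hψlL] using h2.symm
end

section
/- Let S = M[G;I,Λ;P] be a normalised Rees matrix semigroup over a countable group G with countable index sets I, Λ, which is homogeneous as a completely simple semigroup. Then for every i ∈ I with i ≠ 1_I, the set of entries of column i equals G^P, i.e. {P(λ,i) : λ ∈ Λ} = G^P; and for every λ ∈ Λ with λ ≠ 1_Λ, the set of entries of row λ equals G^P, i.e. {P(λ,i) : i ∈ I} = G^P. -/
/-- If a normalised Rees matrix semigroup `S = M[G;I,Λ;P]` (countable
group, countable index sets) is homogeneous as a completely simple semigroup, then for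
every `i ≠ 1_I` the set of entries of column `i` equals `G^P`, and for every `λ ≠ 1_Λ`
the set of entries of row `λ` equals `G^P`. -/
theorem rees_homogeneous_rows_columns {G I Λ : Type*} [Group G] [Countable G]
    [Countable I] [Countable Λ]
    (P : Λ → I → G) (iI : I) (lL : Λ)
    (hrow : ∀ j : I, P lL j = 1) (hcol : ∀ m : Λ, P m iI = 1)
    (hhom : IsCSHomogeneous (reesMul P) (reesInv P)) :
    (∀ i : I, i ≠ iI → {g : G | ∃ l : Λ, P l i = g} = reesEntries P) ∧
    (∀ l : Λ, l ≠ lL → {g : G | ∃ i : I, P l i = g} = reesEntries P) := by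
  classical
  constructor
  · -- columns
    intro i hi
    ext g
    simp only [Set.mem_setOf_eq, reesEntries]
    constructor
    · rintro ⟨l, rfl⟩; exact ⟨l, i, rfl⟩
    · rintro ⟨μ, j, rfl⟩
      by_cases hj : j = iI
      · exact ⟨lL, by rw [hrow, hj, hcol]⟩
      · -- main case : build an automorphism swapping columns i and j, fixing e and (iI, P μ j, lL)
        set σ : Equiv.Perm I := Equiv.swap i j with hσ
        have hσiI : σ iI = iI := Equiv.swap_apply_of_ne_of_ne (Ne.symm hi) (Ne.symm hj)
        have hσi : σ i = j := Equiv.swap_apply_left i j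
        have hσj : σ j = i := Equiv.swap_apply_right i j
        set φ : I × G × Λ → I × G × Λ := fun x => (σ x.1, x.2.1, x.2.2) with hφ
        have hφφ : ∀ x, φ (φ x) = x := by
          intro x; simp [hφ, hσ, Equiv.swap_apply_self]
        set X : Finset (I × G × Λ) :=
          {(iI, 1, lL), (i, 1, lL), (j, 1, lL), (iI, P μ j, lL)} with hX
        have hmemX : ∀ x ∈ (X : Set (I × G × Λ)), x.2.2 = lL ∧ φ x ∈ (X : Set (I × G × Λ)) := by
          intro x hx
          simp only [hX, Finset.coe_insert, Set.mem_insert_iff, Finset.coe_singleton,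
            Set.mem_singleton_iff] at hx ⊢
          rcases hx with rfl | rfl | rfl | rfl <;>
            simp [hφ, hσiI, hσi, hσj]
        have hlast : ∀ s, CSClosure (reesMul P) (reesInv P) (X : Set (I × G × Λ)) s →
            s.2.2 = lL := by
          intro s hs
          induction hs with
          | base hx => exact (hmemX _ hx).1
          | mul hx hy ihx ihy => exact ihy
          | inv hx ih => exact ih
        have hφmul : ∀ x y : I × G × Λ, x.2.2 = lL →
            φ (reesMul P x y) = reesMul P (φ x) (φ y) := by
          intro x y hx
          simp [hφ, reesMul, hx, hrow]
        have hφinv : ∀ x : I × G × Λ, x.2.2 = lL →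
            φ (reesInv P x) = reesInv P (φ x) := by
          intro x hx
          simp [hφ, reesInv, hx, hrow]
        have hmaps : ∀ s, CSClosure (reesMul P) (reesInv P) (X : Set (I × G × Λ)) s →
            CSClosure (reesMul P) (reesInv P) (X : Set (I × G × Λ)) (φ s) := by
          intro s hs
          induction hs with
          | base hx => exact CSClosure.base (hmemX _ hx).2
          | mul hx hy ihx ihy =>
              rw [hφmul _ _ (hlast _ hx)]; exact CSClosure.mul ihx ihy
          | inv hx ih =>
              rw [hφinv _ (hlast _ hx)]; exact CSClosure.inv ih
        have hbij : Set.BijOn φ {s | CSClosure (reesMul P) (reesInv P) (X : Set (I × G × Λ)) s}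
            {s | CSClosure (reesMul P) (reesInv P) (X : Set (I × G × Λ)) s} := by
          refine ⟨fun s hs => hmaps s hs, ?_, fun s hs => ⟨φ s, hmaps s hs, hφφ s⟩⟩
          intro a _ b _ hab
          have := congrArg φ hab
          rwa [hφφ, hφφ] at this
        obtain ⟨Φ, hΦbij, hΦmul, hΦext⟩ :=
          hhom X X φ hbij (fun x y hx _ => hφmul x y (hlast x hx))
        have hΦe : Φ (iI, 1, lL) = ((iI : I), (1 : G), lL) := by
          rw [hΦext _ (CSClosure.base (by simp [hX]))]
          simp [hφ, hσiI]
        have hΦj : Φ (j, 1, lL) = ((i : I), (1 : G), lL) := by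
          rw [hΦext _ (CSClosure.base (by simp [hX]))]
          simp [hφ, hσj]
        have hΦg : Φ (iI, P μ j, lL) = ((iI : I), P μ j, lL) := by
          rw [hΦext _ (CSClosure.base (by simp [hX]))]
          simp [hφ, hσiI]
        have e1 : reesMul P (iI, 1, μ) (iI, 1, lL) = ((iI : I), (1 : G), lL) := by
          simp [reesMul, hcol]
        have e2 : reesMul P (iI, 1, μ) (j, 1, lL) = ((iI : I), P μ j, lL) := by
          simp [reesMul]
        have k1 : reesMul P (Φ (iI, 1, μ)) ((iI : I), (1 : G), lL)
            = ((iI : I), (1 : G), lL) := by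
          rw [← hΦe, ← hΦmul, e1]
        simp only [reesMul, hcol, mul_one, Prod.mk.injEq] at k1
        obtain ⟨hq1, hq2, -⟩ := k1
        have k2 : reesMul P (Φ (iI, 1, μ)) ((i : I), (1 : G), lL)
            = ((iI : I), P μ j, lL) := by
          rw [← hΦg, ← hΦj, ← hΦmul, e2]
        simp only [reesMul, hq2, one_mul, mul_one, Prod.mk.injEq] at k2
        exact ⟨(Φ (iI, 1, μ)).2.2, k2.2.1⟩
  · -- rows
    intro l hl
    ext g
    simp only [Set.mem_setOf_eq, reesEntries]
    constructor
    · rintro ⟨i, rfl⟩; exact ⟨l, i, rfl⟩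
    · rintro ⟨μ, j, rfl⟩
      by_cases hμ : μ = lL
      · exact ⟨iI, by rw [hcol, hμ, hrow]⟩
      · set σ : Equiv.Perm Λ := Equiv.swap l μ with hσ
        have hσlL : σ lL = lL := Equiv.swap_apply_of_ne_of_ne (Ne.symm hl) (Ne.symm hμ)
        have hσl : σ l = μ := Equiv.swap_apply_left l μ
        have hσμ : σ μ = l := Equiv.swap_apply_right l μ
        set φ : I × G × Λ → I × G × Λ := fun x => (x.1, x.2.1, σ x.2.2) with hφ
        have hφφ : ∀ x, φ (φ x) = x := by
          intro x; simp [hφ, hσ, Equiv.swap_apply_self]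
        set X : Finset (I × G × Λ) :=
          {(iI, 1, lL), (iI, 1, l), (iI, 1, μ), (iI, P μ j, lL)} with hX
        have hmemX : ∀ x ∈ (X : Set (I × G × Λ)), x.1 = iI ∧ φ x ∈ (X : Set (I × G × Λ)) := by
          intro x hx
          simp only [hX, Finset.coe_insert, Set.mem_insert_iff, Finset.coe_singleton,
            Set.mem_singleton_iff] at hx ⊢
          rcases hx with rfl | rfl | rfl | rfl <;>
            simp [hφ, hσlL, hσl, hσμ]
        have hfst : ∀ s, CSClosure (reesMul P) (reesInv P) (X : Set (I × G × Λ)) s →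
            s.1 = iI := by
          intro s hs
          induction hs with
          | base hx => exact (hmemX _ hx).1
          | mul hx hy ihx ihy => exact ihx
          | inv hx ih => exact ih
        have hφmul : ∀ x y : I × G × Λ, y.1 = iI →
            φ (reesMul P x y) = reesMul P (φ x) (φ y) := by
          intro x y hy
          simp [hφ, reesMul, hy, hcol]
        have hφinv : ∀ x : I × G × Λ, x.1 = iI →
            φ (reesInv P x) = reesInv P (φ x) := by
          intro x hx
          simp [hφ, reesInv, hx, hcol]
        have hmaps : ∀ s, CSClosure (reesMul P) (reesInv P) (X : Set (I × G × Λ)) s →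
            CSClosure (reesMul P) (reesInv P) (X : Set (I × G × Λ)) (φ s) := by
          intro s hs
          induction hs with
          | base hx => exact CSClosure.base (hmemX _ hx).2
          | mul hx hy ihx ihy =>
              rw [hφmul _ _ (hfst _ hy)]; exact CSClosure.mul ihx ihy
          | inv hx ih =>
              rw [hφinv _ (hfst _ hx)]; exact CSClosure.inv ih
        have hbij : Set.BijOn φ {s | CSClosure (reesMul P) (reesInv P) (X : Set (I × G × Λ)) s}
            {s | CSClosure (reesMul P) (reesInv P) (X : Set (I × G × Λ)) s} := by
          refine ⟨fun s hs => hmaps s hs, ?_, fun s hs => ⟨φ s, hmaps s hs, hφφ s⟩⟩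
          intro a _ b _ hab
          have := congrArg φ hab
          rwa [hφφ, hφφ] at this
        obtain ⟨Φ, hΦbij, hΦmul, hΦext⟩ :=
          hhom X X φ hbij (fun x y _ hy => hφmul x y (hfst y hy))
        have hΦe : Φ (iI, 1, lL) = ((iI : I), (1 : G), lL) := by
          rw [hΦext _ (CSClosure.base (by simp [hX]))]
          simp [hφ, hσlL]
        have hΦμ : Φ (iI, 1, μ) = ((iI : I), (1 : G), l) := by
          rw [hΦext _ (CSClosure.base (by simp [hX]))]
          simp [hφ, hσμ]
        have hΦg : Φ (iI, P μ j, lL) = ((iI : I), P μ j, lL) := by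
          rw [hΦext _ (CSClosure.base (by simp [hX]))]
          simp [hφ, hσlL]
        have e1 : reesMul P (iI, 1, lL) (j, 1, lL) = ((iI : I), (1 : G), lL) := by
          simp [reesMul, hrow]
        have e2 : reesMul P (iI, 1, μ) (j, 1, lL) = ((iI : I), P μ j, lL) := by
          simp [reesMul]
        have k1 : reesMul P ((iI : I), (1 : G), lL) (Φ (j, 1, lL))
            = ((iI : I), (1 : G), lL) := by
          rw [← hΦe, ← hΦmul, e1]
        simp only [reesMul, hrow, one_mul, Prod.mk.injEq] at k1
        obtain ⟨-, hq2, hq3⟩ := k1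
        have k2 : reesMul P ((iI : I), (1 : G), l) (Φ (j, 1, lL))
            = ((iI : I), P μ j, lL) := by
          rw [← hΦg, ← hΦμ, ← hΦmul, e2]
        simp only [reesMul, hq2, one_mul, mul_one, Prod.mk.injEq] at k2
        exact ⟨(Φ (j, 1, lL)).1, k2.2.1⟩
end

section
/- Let S = M[G;I,Λ;P] be a normalised Rees matrix semigroup over a countable group G with countable index sets I, Λ, which is homogeneous as a completely simple semigroup. Then the set of entries G^P is a characteristic subgroup of G: it contains the identity, is closed under products and inverses, and θ(G^P) = G^P for every automorphism θ of G. -/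
section Aux

variable {G I Λ : Type*} [Group G]

lemma cl_source_eq (P : Λ → I → G) (iI : I) (lL : Λ)
    (hrow : ∀ j : I, P lL j = 1) (hcol : ∀ m : Λ, P m iI = 1) (a : G) (l0 : Λ) :
    {s | CSClosure (reesMul P) (reesInv P)
        ({(iI, (1:G), l0), (iI, a, lL)} : Set (I × G × Λ)) s}
      = {x : I × G × Λ | x.1 = iI ∧ (∃ n : ℤ, x.2.1 = a ^ n) ∧ (x.2.2 = l0 ∨ x.2.2 = lL)} := by
  ext x
  simp only [Set.mem_setOf_eq]
  constructor
  · intro h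
    induction h with
    | @base x hx =>
      simp only [Set.mem_insert_iff, Set.mem_singleton_iff] at hx
      rcases hx with rfl | rfl
      · exact ⟨rfl, ⟨0, by simp⟩, Or.inl rfl⟩
      · exact ⟨rfl, ⟨1, by simp⟩, Or.inr rfl⟩
    | @mul x y hx hy ihx ihy =>
      obtain ⟨x1, x2, x3⟩ := x
      obtain ⟨y1, y2, y3⟩ := y
      obtain ⟨hx1, ⟨m, hx2⟩, hx3⟩ := ihx
      obtain ⟨hy1, ⟨n, hy2⟩, hy3⟩ := ihy
      dsimp at hx1 hx2 hx3 hy1 hy2 hy3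
      subst hx1; subst hy1; subst hx2; subst hy2
      exact ⟨rfl, ⟨m + n, by simp [reesMul, hcol, zpow_add]⟩, hy3⟩
    | @inv x hx ih =>
      obtain ⟨x1, x2, x3⟩ := x
      obtain ⟨hx1, ⟨m, hx2⟩, hx3⟩ := ih
      dsimp at hx1 hx2 hx3
      subst hx1; subst hx2
      exact ⟨rfl, ⟨-m, by simp [reesInv, hcol, zpow_neg]⟩, hx3⟩
  · rintro ⟨hx1, ⟨n, hx2⟩, hx3⟩
    obtain ⟨x1, x2, x3⟩ := x
    dsimp at hx1 hx2 hx3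
    have h1 : CSClosure (reesMul P) (reesInv P)
        ({(iI, (1:G), l0), (iI, a, lL)} : Set (I × G × Λ)) (iI, a ^ (1:ℤ), lL) := by
      rw [zpow_one]; exact CSClosure.base (by simp)
    have hmulstep : ∀ m k : ℤ,
        CSClosure (reesMul P) (reesInv P)
          ({(iI, (1:G), l0), (iI, a, lL)} : Set (I × G × Λ)) (iI, a ^ m, lL) →
        CSClosure (reesMul P) (reesInv P)
          ({(iI, (1:G), l0), (iI, a, lL)} : Set (I × G × Λ)) (iI, a ^ k, lL) →
        CSClosure (reesMul P) (reesInv P)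
          ({(iI, (1:G), l0), (iI, a, lL)} : Set (I × G × Λ)) (iI, a ^ (m + k), lL) := by
      intro m k hm hk
      have he : reesMul P ((iI, a ^ m, lL) : I × G × Λ) (iI, a ^ k, lL)
          = (iI, a ^ (m + k), lL) := by
        simp [reesMul, hrow, zpow_add]
      exact he ▸ CSClosure.mul hm hk
    have hinvstep : ∀ m : ℤ,
        CSClosure (reesMul P) (reesInv P)
          ({(iI, (1:G), l0), (iI, a, lL)} : Set (I × G × Λ)) (iI, a ^ m, lL) →
        CSClosure (reesMul P) (reesInv P)
          ({(iI, (1:G), l0), (iI, a, lL)} : Set (I × G × Λ)) (iI, a ^ (-m), lL) := by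
      intro m hm
      have he : reesInv P ((iI, a ^ m, lL) : I × G × Λ) = (iI, a ^ (-m), lL) := by
        simp [reesInv, hrow, zpow_neg]
      exact he ▸ CSClosure.inv hm
    have key : ∀ n : ℤ, CSClosure (reesMul P) (reesInv P)
        ({(iI, (1:G), l0), (iI, a, lL)} : Set (I × G × Λ)) (iI, a ^ n, lL) := by
      intro n
      induction n using Int.induction_on with
      | zero =>
        have h := hmulstep 1 (-1) h1 (hinvstep 1 h1)
        rwa [show (1:ℤ) + -1 = 0 by ring] at h
      | succ i ih => exact hmulstep i 1 ih h1
      | pred i ih =>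
        have h := hmulstep (-i) (-1) ih (hinvstep 1 h1)
        rwa [show -(i:ℤ) + -1 = -i - 1 by ring] at h
    have hfin : CSClosure (reesMul P) (reesInv P)
        ({(iI, (1:G), l0), (iI, a, lL)} : Set (I × G × Λ)) (iI, a ^ n, l0) := by
      have he : reesMul P ((iI, a ^ n, lL) : I × G × Λ) (iI, (1:G), l0)
          = (iI, a ^ n, l0) := by
        simp [reesMul, hrow]
      exact he ▸ CSClosure.mul (key n) (CSClosure.base (by simp))
    rw [show ((x1, x2, x3) : I × G × Λ) = (iI, a ^ n, x3) by rw [hx1, hx2]]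
    rcases hx3 with rfl | rfl
    · exact hfin
    · exact key n

end Aux

section Aux2

variable {G I Λ : Type*} [Group G]

lemma cl_target_eq (P : Λ → I → G) (lL : Λ)
    (hrow : ∀ j : I, P lL j = 1) (a : G) (j0 : I) (m0 : Λ) :
    {s | CSClosure (reesMul P) (reesInv P)
        ({(j0, (1:G), lL), (j0, a * (P m0 j0)⁻¹, m0)} : Set (I × G × Λ)) s}
      = {x : I × G × Λ | x.1 = j0 ∧
          ((x.2.2 = lL ∧ ∃ n : ℤ, x.2.1 = a ^ n) ∨
           (x.2.2 = m0 ∧ ∃ n : ℤ, x.2.1 = a ^ n * (P m0 j0)⁻¹))} := by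
  ext x
  simp only [Set.mem_setOf_eq]
  constructor
  · intro h
    induction h with
    | @base x hx =>
      simp only [Set.mem_insert_iff, Set.mem_singleton_iff] at hx
      rcases hx with rfl | rfl
      · exact ⟨rfl, Or.inl ⟨rfl, 0, by simp⟩⟩
      · exact ⟨rfl, Or.inr ⟨rfl, 1, by simp⟩⟩
    | @mul x y hx hy ihx ihy =>
      obtain ⟨x1, x2, x3⟩ := x
      obtain ⟨y1, y2, y3⟩ := y
      obtain ⟨hx1, hxb⟩ := ihx
      obtain ⟨hy1, hyb⟩ := ihy
      dsimp at hx1 hxb hy1 hyb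
      refine ⟨hx1, ?_⟩
      have hmid : (reesMul P ((x1, x2, x3) : I × G × Λ) (y1, y2, y3)).2.1
          = x2 * P x3 y1 * y2 := rfl
      have hlast : (reesMul P ((x1, x2, x3) : I × G × Λ) (y1, y2, y3)).2.2 = y3 := rfl
      rw [hlast, hmid]
      rcases hxb with ⟨hx3, m, hx2⟩ | ⟨hx3, m, hx2⟩ <;>
        rcases hyb with ⟨hy3, n, hy2⟩ | ⟨hy3, n, hy2⟩
      · exact Or.inl ⟨hy3, m + n, by
          rw [hx3, hy1, hrow, hx2, hy2, zpow_add]; group⟩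
      · exact Or.inr ⟨hy3, m + n, by
          rw [hx3, hy1, hrow, hx2, hy2, zpow_add]; group⟩
      · exact Or.inl ⟨hy3, m + n, by
          rw [hx3, hy1, hx2, hy2, zpow_add]; group⟩
      · exact Or.inr ⟨hy3, m + n, by
          rw [hx3, hy1, hx2, hy2, zpow_add]; group⟩
    | @inv x hx ih =>
      obtain ⟨x1, x2, x3⟩ := x
      obtain ⟨hx1, hxb⟩ := ih
      dsimp at hx1 hxb
      refine ⟨hx1, ?_⟩
      have hmid : (reesInv P ((x1, x2, x3) : I × G × Λ)).2.1
          = (P x3 x1)⁻¹ * x2⁻¹ * (P x3 x1)⁻¹ := rfl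
      have hlast : (reesInv P ((x1, x2, x3) : I × G × Λ)).2.2 = x3 := rfl
      rw [hlast, hmid]
      rcases hxb with ⟨hx3, m, hx2⟩ | ⟨hx3, m, hx2⟩
      · exact Or.inl ⟨hx3, -m, by rw [hx3, hx1, hrow, hx2, zpow_neg]; group⟩
      · exact Or.inr ⟨hx3, -m, by rw [hx3, hx1, hx2, zpow_neg]; group⟩
  · rintro ⟨hx1, hbr⟩
    obtain ⟨x1, x2, x3⟩ := x
    dsimp at hx1 hbr
    have hd1 : CSClosure (reesMul P) (reesInv P)
        ({(j0, (1:G), lL), (j0, a * (P m0 j0)⁻¹, m0)} : Set (I × G × Λ))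
        (j0, a ^ (1:ℤ) * (P m0 j0)⁻¹, m0) := by
      rw [zpow_one]; exact CSClosure.base (by simp)
    have hmulstep : ∀ m k : ℤ,
        CSClosure (reesMul P) (reesInv P)
          ({(j0, (1:G), lL), (j0, a * (P m0 j0)⁻¹, m0)} : Set (I × G × Λ))
          (j0, a ^ m * (P m0 j0)⁻¹, m0) →
        CSClosure (reesMul P) (reesInv P)
          ({(j0, (1:G), lL), (j0, a * (P m0 j0)⁻¹, m0)} : Set (I × G × Λ))
          (j0, a ^ k * (P m0 j0)⁻¹, m0) →
        CSClosure (reesMul P) (reesInv P)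
          ({(j0, (1:G), lL), (j0, a * (P m0 j0)⁻¹, m0)} : Set (I × G × Λ))
          (j0, a ^ (m + k) * (P m0 j0)⁻¹, m0) := by
      intro m k hm hk
      have he : reesMul P ((j0, a ^ m * (P m0 j0)⁻¹, m0) : I × G × Λ)
          (j0, a ^ k * (P m0 j0)⁻¹, m0) = (j0, a ^ (m + k) * (P m0 j0)⁻¹, m0) := by
        simp only [reesMul, Prod.mk.injEq, zpow_add]
        refine ⟨trivial, by group, trivial⟩
      exact he ▸ CSClosure.mul hm hk
    have hinvstep : ∀ m : ℤ,
        CSClosure (reesMul P) (reesInv P)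
          ({(j0, (1:G), lL), (j0, a * (P m0 j0)⁻¹, m0)} : Set (I × G × Λ))
          (j0, a ^ m * (P m0 j0)⁻¹, m0) →
        CSClosure (reesMul P) (reesInv P)
          ({(j0, (1:G), lL), (j0, a * (P m0 j0)⁻¹, m0)} : Set (I × G × Λ))
          (j0, a ^ (-m) * (P m0 j0)⁻¹, m0) := by
      intro m hm
      have he : reesInv P ((j0, a ^ m * (P m0 j0)⁻¹, m0) : I × G × Λ)
          = (j0, a ^ (-m) * (P m0 j0)⁻¹, m0) := by
        simp only [reesInv, Prod.mk.injEq, zpow_neg]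
        refine ⟨trivial, by group, trivial⟩
      exact he ▸ CSClosure.inv hm
    have keyd : ∀ n : ℤ, CSClosure (reesMul P) (reesInv P)
        ({(j0, (1:G), lL), (j0, a * (P m0 j0)⁻¹, m0)} : Set (I × G × Λ))
        (j0, a ^ n * (P m0 j0)⁻¹, m0) := by
      intro n
      induction n using Int.induction_on with
      | zero =>
        have h := hmulstep 1 (-1) hd1 (hinvstep 1 hd1)
        rwa [show (1:ℤ) + -1 = 0 by ring] at h
      | succ i ih => exact hmulstep i 1 ih hd1
      | pred i ih =>
        have h := hmulstep (-i) (-1) ih (hinvstep 1 hd1)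
        rwa [show -(i:ℤ) + -1 = -i - 1 by ring] at h
    have keye : ∀ n : ℤ, CSClosure (reesMul P) (reesInv P)
        ({(j0, (1:G), lL), (j0, a * (P m0 j0)⁻¹, m0)} : Set (I × G × Λ))
        (j0, a ^ n, lL) := by
      intro n
      have he : reesMul P ((j0, a ^ n * (P m0 j0)⁻¹, m0) : I × G × Λ) (j0, (1:G), lL)
          = (j0, a ^ n, lL) := by
        simp only [reesMul, Prod.mk.injEq]
        refine ⟨trivial, by group, trivial⟩
      exact he ▸ CSClosure.mul (keyd n) (CSClosure.base (by simp))
    rcases hbr with ⟨hx3, n, hx2⟩ | ⟨hx3, n, hx2⟩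
    · rw [show ((x1, x2, x3) : I × G × Λ) = (j0, a ^ n, lL) by rw [hx1, hx2, hx3]]
      exact keye n
    · rw [show ((x1, x2, x3) : I × G × Λ) = (j0, a ^ n * (P m0 j0)⁻¹, m0) by
        rw [hx1, hx2, hx3]]
      exact keyd n

end Aux2

section Aux3

variable {G I Λ : Type*} [Group G]

lemma extract_entry (P : Λ → I → G) (iI : I) (lL : Λ)
    (hrow : ∀ j : I, P lL j = 1)
    (Φ : I × G × Λ → I × G × Λ)
    (hm : ∀ x y, Φ (reesMul P x y) = reesMul P (Φ x) (Φ y))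
    (l0 : Λ) (i0 : I) {j0 j1 : I} {n0 m0 : Λ} {c : G}
    (h1 : Φ (iI, 1, l0) = (j0, 1, n0))
    (h2 : Φ (iI, P l0 i0, lL) = (j1, c, m0)) :
    ∃ ii : I, c = P n0 ii * (P m0 ii)⁻¹ := by
  rcases hP : Φ (i0, (1:G), lL) with ⟨ii, g, mm⟩
  have e1 : reesMul P ((i0, (P l0 i0)⁻¹, lL) : I × G × Λ) (iI, P l0 i0, lL)
      = (i0, 1, lL) := by
    simp [reesMul, hrow]
  have hmm : mm = m0 := by
    have h := hm (i0, (P l0 i0)⁻¹, lL) (iI, P l0 i0, lL)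
    rw [e1, hP, h2] at h
    exact congrArg (fun z => z.2.2) h
  rw [hmm] at hP
  have e2 : reesMul P ((i0, (1:G), lL) : I × G × Λ) (i0, 1, lL) = (i0, 1, lL) := by
    simp [reesMul, hrow]
  have hg : g = (P m0 ii)⁻¹ := by
    have h := hm (i0, 1, lL) (i0, 1, lL)
    rw [e2, hP] at h
    have hmid : g = g * P m0 ii * g := congrArg (fun z => z.2.1) h
    have h3 : g * 1 = g * (P m0 ii * g) := by
      rw [mul_one, ← mul_assoc]; exact hmid
    have h4 : (1 : G) = P m0 ii * g := mul_left_cancel h3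
    exact (inv_eq_of_mul_eq_one_right h4.symm).symm
  have e3 : reesMul P ((iI, (1:G), l0) : I × G × Λ) (i0, 1, lL)
      = (iI, P l0 i0, lL) := by
    simp [reesMul]
  have h := hm (iI, 1, l0) (i0, 1, lL)
  rw [e3, h1, h2, hP] at h
  have hc : c = 1 * P n0 ii * g := congrArg (fun z => z.2.1) h
  exact ⟨ii, by rw [hc, hg, one_mul]⟩

end Aux3

section Aux4

variable {G I Λ : Type*} [Group G]

lemma theta_entry (P : Λ → I → G) (iI : I) (lL : Λ)
    (hrow : ∀ j : I, P lL j = 1) (hcol : ∀ m : Λ, P m iI = 1)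
    (hhom : IsCSHomogeneous (reesMul P) (reesInv P))
    (θ : G ≃* G) (l0 : Λ) (i0 : I) :
    θ (P l0 i0) ∈ reesEntries P := by
  classical
  set a := P l0 i0 with ha
  set φ : I × G × Λ → I × G × Λ := fun x => (x.1, θ x.2.1, x.2.2) with hφ
  set X : Finset (I × G × Λ) := {(iI, 1, l0), (iI, a, lL)} with hX
  set Y : Finset (I × G × Λ) := {(iI, 1, l0), (iI, θ a, lL)} with hY
  have hXc : (X : Set (I × G × Λ)) = {(iI, (1:G), l0), (iI, a, lL)} := by
    simp [hX]
  have hYc : (Y : Set (I × G × Λ)) = {(iI, (1:G), l0), (iI, θ a, lL)} := by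
    simp [hY]
  have hclX : {s | CSClosure (reesMul P) (reesInv P) (X : Set (I × G × Λ)) s}
      = {x : I × G × Λ | x.1 = iI ∧ (∃ n : ℤ, x.2.1 = a ^ n) ∧ (x.2.2 = l0 ∨ x.2.2 = lL)} := by
    rw [hXc]; exact cl_source_eq P iI lL hrow hcol a l0
  have hclY : {s | CSClosure (reesMul P) (reesInv P) (Y : Set (I × G × Λ)) s}
      = {x : I × G × Λ | x.1 = iI ∧ (∃ n : ℤ, x.2.1 = (θ a) ^ n) ∧ (x.2.2 = l0 ∨ x.2.2 = lL)} := by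
    rw [hYc]; exact cl_source_eq P iI lL hrow hcol (θ a) l0
  have hbij : Set.BijOn φ {s | CSClosure (reesMul P) (reesInv P) (X : Set (I × G × Λ)) s}
      {s | CSClosure (reesMul P) (reesInv P) (Y : Set (I × G × Λ)) s} := by
    rw [hclX, hclY]
    refine ⟨?_, ?_, ?_⟩
    · rintro ⟨x1, x2, x3⟩ ⟨h1, ⟨n, h2⟩, h3⟩
      have h2' : x2 = a ^ n := h2
      exact ⟨h1, ⟨n, by simp [hφ, h2', map_zpow]⟩, h3⟩
    · rintro ⟨x1, x2, x3⟩ - ⟨y1, y2, y3⟩ - h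
      simp only [hφ, Prod.mk.injEq] at h ⊢
      exact ⟨h.1, θ.injective h.2.1, h.2.2⟩
    · rintro ⟨y1, y2, y3⟩ ⟨h1, ⟨n, h2⟩, h3⟩
      have h2' : y2 = (θ a) ^ n := h2
      refine ⟨(y1, a ^ n, y3), ⟨h1, ⟨n, rfl⟩, h3⟩, ?_⟩
      simp [hφ, h2', map_zpow]
  have hmul : ∀ x y : I × G × Λ,
      CSClosure (reesMul P) (reesInv P) (X : Set (I × G × Λ)) x →
      CSClosure (reesMul P) (reesInv P) (X : Set (I × G × Λ)) y →
      φ (reesMul P x y) = reesMul P (φ x) (φ y) := by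
    intro x y hx hy
    have hx' : x ∈ {x : I × G × Λ | x.1 = iI ∧ (∃ n : ℤ, x.2.1 = a ^ n)
        ∧ (x.2.2 = l0 ∨ x.2.2 = lL)} := by rw [← hclX]; exact hx
    have hy' : y ∈ {x : I × G × Λ | x.1 = iI ∧ (∃ n : ℤ, x.2.1 = a ^ n)
        ∧ (x.2.2 = l0 ∨ x.2.2 = lL)} := by rw [← hclX]; exact hy
    obtain ⟨x1, x2, x3⟩ := x
    obtain ⟨y1, y2, y3⟩ := y
    obtain ⟨hx1, -, -⟩ := hx'
    obtain ⟨hy1, -, -⟩ := hy'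
    dsimp at hx1 hy1
    rw [show ((x1, x2, x3) : I × G × Λ) = (iI, x2, x3) by rw [hx1],
        show ((y1, y2, y3) : I × G × Λ) = (iI, y2, y3) by rw [hy1]]
    simp [hφ, reesMul, hcol, map_mul]
  obtain ⟨Φ, hΦb, hΦm, hΦe⟩ := hhom X Y φ hbij hmul
  have hmem1 : CSClosure (reesMul P) (reesInv P) (X : Set (I × G × Λ)) (iI, 1, l0) :=
    CSClosure.base (by rw [hXc]; simp)
  have hmem2 : CSClosure (reesMul P) (reesInv P) (X : Set (I × G × Λ)) (iI, a, lL) :=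
    CSClosure.base (by rw [hXc]; simp)
  have hm1 : Φ (iI, 1, l0) = (iI, (1:G), l0) := by
    rw [hΦe _ hmem1]; try simp [hφ]
  have hm2 : Φ (iI, P l0 i0, lL) = (iI, θ (P l0 i0), lL) := by
    rw [← ha, hΦe _ hmem2]; try simp [hφ]
  obtain ⟨ii, hc⟩ := extract_entry P iI lL hrow Φ hΦm l0 i0 hm1 hm2
  exact ⟨l0, ii, by rw [hrow, inv_one, mul_one] at hc; exact hc.symm⟩

end Aux4

section Aux5

variable {G I Λ : Type*} [Group G]

lemma inv_entry (P : Λ → I → G) (iI : I) (lL : Λ)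
    (hrow : ∀ j : I, P lL j = 1) (hcol : ∀ m : Λ, P m iI = 1)
    (hhom : IsCSHomogeneous (reesMul P) (reesInv P))
    (l0 : Λ) (i0 : I) :
    (P l0 i0)⁻¹ ∈ reesEntries P := by
  classical
  set a := P l0 i0 with ha
  set φ : I × G × Λ → I × G × Λ := fun x => (x.1, x.2.1⁻¹, x.2.2) with hφ
  set X : Finset (I × G × Λ) := {(iI, 1, l0), (iI, a, lL)} with hX
  set Y : Finset (I × G × Λ) := {(iI, 1, l0), (iI, a⁻¹, lL)} with hY
  have hXc : (X : Set (I × G × Λ)) = {(iI, (1:G), l0), (iI, a, lL)} := by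
    simp [hX]
  have hYc : (Y : Set (I × G × Λ)) = {(iI, (1:G), l0), (iI, a⁻¹, lL)} := by
    simp [hY]
  have hclX : {s | CSClosure (reesMul P) (reesInv P) (X : Set (I × G × Λ)) s}
      = {x : I × G × Λ | x.1 = iI ∧ (∃ n : ℤ, x.2.1 = a ^ n) ∧ (x.2.2 = l0 ∨ x.2.2 = lL)} := by
    rw [hXc]; exact cl_source_eq P iI lL hrow hcol a l0
  have hclY : {s | CSClosure (reesMul P) (reesInv P) (Y : Set (I × G × Λ)) s}
      = {x : I × G × Λ | x.1 = iI ∧ (∃ n : ℤ, x.2.1 = a⁻¹ ^ n) ∧ (x.2.2 = l0 ∨ x.2.2 = lL)} := by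
    rw [hYc]; exact cl_source_eq P iI lL hrow hcol a⁻¹ l0
  have hbij : Set.BijOn φ {s | CSClosure (reesMul P) (reesInv P) (X : Set (I × G × Λ)) s}
      {s | CSClosure (reesMul P) (reesInv P) (Y : Set (I × G × Λ)) s} := by
    rw [hclX, hclY]
    refine ⟨?_, ?_, ?_⟩
    · rintro ⟨x1, x2, x3⟩ ⟨h1, ⟨n, h2⟩, h3⟩
      have h2' : x2 = a ^ n := h2
      exact ⟨h1, ⟨n, by simp [hφ, h2', inv_zpow]⟩, h3⟩
    · rintro ⟨x1, x2, x3⟩ - ⟨y1, y2, y3⟩ - h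
      simp only [hφ, Prod.mk.injEq] at h ⊢
      exact ⟨h.1, inv_injective h.2.1, h.2.2⟩
    · rintro ⟨y1, y2, y3⟩ ⟨h1, ⟨n, h2⟩, h3⟩
      have h2' : y2 = a⁻¹ ^ n := h2
      refine ⟨(y1, a ^ n, y3), ⟨h1, ⟨n, rfl⟩, h3⟩, ?_⟩
      simp [hφ, h2', inv_zpow]
  have hmul : ∀ x y : I × G × Λ,
      CSClosure (reesMul P) (reesInv P) (X : Set (I × G × Λ)) x →
      CSClosure (reesMul P) (reesInv P) (X : Set (I × G × Λ)) y →
      φ (reesMul P x y) = reesMul P (φ x) (φ y) := by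
    intro x y hx hy
    have hx' : x ∈ {x : I × G × Λ | x.1 = iI ∧ (∃ n : ℤ, x.2.1 = a ^ n)
        ∧ (x.2.2 = l0 ∨ x.2.2 = lL)} := by rw [← hclX]; exact hx
    have hy' : y ∈ {x : I × G × Λ | x.1 = iI ∧ (∃ n : ℤ, x.2.1 = a ^ n)
        ∧ (x.2.2 = l0 ∨ x.2.2 = lL)} := by rw [← hclX]; exact hy
    obtain ⟨x1, x2, x3⟩ := x
    obtain ⟨y1, y2, y3⟩ := y
    obtain ⟨hx1, ⟨m, hx2⟩, -⟩ := hx'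
    obtain ⟨hy1, ⟨n, hy2⟩, -⟩ := hy'
    dsimp at hx1 hx2 hy1 hy2
    rw [show ((x1, x2, x3) : I × G × Λ) = (iI, a ^ m, x3) by rw [hx1, hx2],
        show ((y1, y2, y3) : I × G × Λ) = (iI, a ^ n, y3) by rw [hy1, hy2]]
    have hcomm : (a ^ m * a ^ n)⁻¹ = (a ^ m)⁻¹ * (a ^ n)⁻¹ := by
      rw [← zpow_add, ← zpow_neg, ← zpow_neg, ← zpow_neg, ← zpow_add, neg_add]
    simp [hφ, reesMul, hcol, hcomm]
  obtain ⟨Φ, hΦb, hΦm, hΦe⟩ := hhom X Y φ hbij hmul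
  have hmem1 : CSClosure (reesMul P) (reesInv P) (X : Set (I × G × Λ)) (iI, 1, l0) :=
    CSClosure.base (by rw [hXc]; simp)
  have hmem2 : CSClosure (reesMul P) (reesInv P) (X : Set (I × G × Λ)) (iI, a, lL) :=
    CSClosure.base (by rw [hXc]; simp)
  have hm1 : Φ (iI, 1, l0) = (iI, (1:G), l0) := by
    rw [hΦe _ hmem1]; try simp [hφ]
  have hm2 : Φ (iI, P l0 i0, lL) = (iI, (P l0 i0)⁻¹, lL) := by
    rw [← ha, hΦe _ hmem2]; try simp [hφ]
  obtain ⟨ii, hc⟩ := extract_entry P iI lL hrow Φ hΦm l0 i0 hm1 hm2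
  exact ⟨l0, ii, by rw [hrow, inv_one, mul_one] at hc; exact hc.symm⟩

end Aux5

section Aux6

variable {G I Λ : Type*} [Group G]

lemma prod_entry (P : Λ → I → G) (iI : I) (lL : Λ)
    (hrow : ∀ j : I, P lL j = 1) (hcol : ∀ m : Λ, P m iI = 1)
    (hhom : IsCSHomogeneous (reesMul P) (reesInv P))
    (l0 : Λ) (i0 : I) (m0 : Λ) (j0 : I) :
    P m0 j0 * (P l0 i0)⁻¹ ∈ reesEntries P := by
  classical
  by_cases hb1 : P m0 j0 = 1
  · rw [hb1, one_mul]; exact inv_entry P iI lL hrow hcol hhom l0 i0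
  by_cases hl : l0 = lL
  · rw [hl, hrow i0, inv_one, mul_one]; exact ⟨m0, j0, rfl⟩
  have hm0 : m0 ≠ lL := fun h => hb1 (by rw [h, hrow])
  set a := P l0 i0 with ha
  set b := P m0 j0 with hb
  set φ : I × G × Λ → I × G × Λ :=
    fun x => if x.2.2 = lL then (j0, x.2.1 * b⁻¹, m0) else (j0, x.2.1, lL) with hφ
  set X : Finset (I × G × Λ) := {(iI, 1, l0), (iI, a, lL)} with hX
  set Y : Finset (I × G × Λ) := {(j0, 1, lL), (j0, a * b⁻¹, m0)} with hY
  have hXc : (X : Set (I × G × Λ)) = {(iI, (1:G), l0), (iI, a, lL)} := by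
    simp [hX]
  have hYc : (Y : Set (I × G × Λ)) = {(j0, (1:G), lL), (j0, a * b⁻¹, m0)} := by
    simp [hY]
  have hclX : {s | CSClosure (reesMul P) (reesInv P) (X : Set (I × G × Λ)) s}
      = {x : I × G × Λ | x.1 = iI ∧ (∃ n : ℤ, x.2.1 = a ^ n) ∧ (x.2.2 = l0 ∨ x.2.2 = lL)} := by
    rw [hXc]; exact cl_source_eq P iI lL hrow hcol a l0
  have hclY : {s | CSClosure (reesMul P) (reesInv P) (Y : Set (I × G × Λ)) s}
      = {x : I × G × Λ | x.1 = j0 ∧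
          ((x.2.2 = lL ∧ ∃ n : ℤ, x.2.1 = a ^ n) ∨
           (x.2.2 = m0 ∧ ∃ n : ℤ, x.2.1 = a ^ n * b⁻¹))} := by
    rw [hYc, hb]; exact cl_target_eq P lL hrow a j0 m0
  have hφ1 : ∀ x1 : I, ∀ x2 : G, φ (x1, x2, l0) = (j0, x2, lL) := by
    intro x1 x2; simp [hφ, hl]
  have hφ2 : ∀ x1 : I, ∀ x2 : G, φ (x1, x2, lL) = (j0, x2 * b⁻¹, m0) := by
    intro x1 x2; simp [hφ]
  have hbij : Set.BijOn φ {s | CSClosure (reesMul P) (reesInv P) (X : Set (I × G × Λ)) s}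
      {s | CSClosure (reesMul P) (reesInv P) (Y : Set (I × G × Λ)) s} := by
    rw [hclX, hclY]
    refine ⟨?_, ?_, ?_⟩
    · rintro ⟨x1, x2, x3⟩ ⟨h1, ⟨n, h2⟩, h3⟩
      have h2' : x2 = a ^ n := h2
      rcases h3 with h3 | h3
      · have h3' : x3 = l0 := h3
        rw [show ((x1, x2, x3) : I × G × Λ) = (x1, x2, l0) from by rw [h3'], hφ1]
        exact ⟨rfl, Or.inl ⟨rfl, n, h2'⟩⟩
      · have h3' : x3 = lL := h3
        rw [show ((x1, x2, x3) : I × G × Λ) = (x1, x2, lL) from by rw [h3'], hφ2]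
        exact ⟨rfl, Or.inr ⟨rfl, n, by rw [h2']⟩⟩
    · rintro ⟨x1, x2, x3⟩ ⟨hx1, -, hx3⟩ ⟨y1, y2, y3⟩ ⟨hy1, -, hy3⟩ h
      dsimp at hx1 hx3 hy1 hy3
      rcases hx3 with rfl | rfl <;> rcases hy3 with rfl | rfl
      · rw [hφ1, hφ1] at h
        have : x2 = y2 := congrArg (fun z => z.2.1) h
        rw [hx1, hy1, this]
      · rw [hφ1, hφ2] at h
        exact absurd (congrArg (fun z => z.2.2) h).symm hm0
      · rw [hφ2, hφ1] at h
        exact absurd (congrArg (fun z => z.2.2) h) hm0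
      · rw [hφ2, hφ2] at h
        have h' : x2 * b⁻¹ = y2 * b⁻¹ := congrArg (fun z => z.2.1) h
        have : x2 = y2 := mul_right_cancel h'
        rw [hx1, hy1, this]
    · rintro ⟨y1, y2, y3⟩ ⟨hy1, hbr⟩
      dsimp at hy1 hbr
      rcases hbr with ⟨hy3, n, hy2⟩ | ⟨hy3, n, hy2⟩
      · refine ⟨(iI, a ^ n, l0), ⟨rfl, ⟨n, rfl⟩, Or.inl rfl⟩, ?_⟩
        rw [hφ1, hy1, hy2, hy3]
      · refine ⟨(iI, a ^ n, lL), ⟨rfl, ⟨n, rfl⟩, Or.inr rfl⟩, ?_⟩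
        rw [hφ2, hy1, hy2, hy3]
  have hmul : ∀ x y : I × G × Λ,
      CSClosure (reesMul P) (reesInv P) (X : Set (I × G × Λ)) x →
      CSClosure (reesMul P) (reesInv P) (X : Set (I × G × Λ)) y →
      φ (reesMul P x y) = reesMul P (φ x) (φ y) := by
    intro x y hx hy
    have hx' : x ∈ {x : I × G × Λ | x.1 = iI ∧ (∃ n : ℤ, x.2.1 = a ^ n)
        ∧ (x.2.2 = l0 ∨ x.2.2 = lL)} := by rw [← hclX]; exact hx
    have hy' : y ∈ {x : I × G × Λ | x.1 = iI ∧ (∃ n : ℤ, x.2.1 = a ^ n)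
        ∧ (x.2.2 = l0 ∨ x.2.2 = lL)} := by rw [← hclX]; exact hy
    obtain ⟨x1, x2, x3⟩ := x
    obtain ⟨y1, y2, y3⟩ := y
    obtain ⟨hx1, -, hx3⟩ := hx'
    obtain ⟨hy1, -, hy3⟩ := hy'
    dsimp at hx1 hx3 hy1 hy3
    rcases hx3 with h3x | h3x <;> rcases hy3 with h3y | h3y
    · rw [show ((x1, x2, x3) : I × G × Λ) = (iI, x2, l0) from by rw [hx1, h3x],
          show ((y1, y2, y3) : I × G × Λ) = (iI, y2, l0) from by rw [hy1, h3y],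
          show reesMul P ((iI, x2, l0) : I × G × Λ) (iI, y2, l0) = (iI, x2 * y2, l0)
            from by simp [reesMul, hcol], hφ1, hφ1, hφ1]
      simp [reesMul, hrow]
    · rw [show ((x1, x2, x3) : I × G × Λ) = (iI, x2, l0) from by rw [hx1, h3x],
          show ((y1, y2, y3) : I × G × Λ) = (iI, y2, lL) from by rw [hy1, h3y],
          show reesMul P ((iI, x2, l0) : I × G × Λ) (iI, y2, lL) = (iI, x2 * y2, lL)
            from by simp [reesMul, hcol], hφ2, hφ1, hφ2]
      simp [reesMul, hrow, mul_assoc]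
    · rw [show ((x1, x2, x3) : I × G × Λ) = (iI, x2, lL) from by rw [hx1, h3x],
          show ((y1, y2, y3) : I × G × Λ) = (iI, y2, l0) from by rw [hy1, h3y],
          show reesMul P ((iI, x2, lL) : I × G × Λ) (iI, y2, l0) = (iI, x2 * y2, l0)
            from by simp [reesMul, hcol], hφ1, hφ2, hφ1]
      simp only [reesMul, Prod.mk.injEq, ← hb]
      refine ⟨trivial, by group, trivial⟩
    · rw [show ((x1, x2, x3) : I × G × Λ) = (iI, x2, lL) from by rw [hx1, h3x],
          show ((y1, y2, y3) : I × G × Λ) = (iI, y2, lL) from by rw [hy1, h3y],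
          show reesMul P ((iI, x2, lL) : I × G × Λ) (iI, y2, lL) = (iI, x2 * y2, lL)
            from by simp [reesMul, hcol], hφ2, hφ2, hφ2]
      simp only [reesMul, Prod.mk.injEq, ← hb]
      refine ⟨trivial, by group, trivial⟩
  obtain ⟨Φ, hΦb, hΦm, hΦe⟩ := hhom X Y φ hbij hmul
  have hmem1 : CSClosure (reesMul P) (reesInv P) (X : Set (I × G × Λ)) (iI, 1, l0) :=
    CSClosure.base (by rw [hXc]; simp)
  have hmem2 : CSClosure (reesMul P) (reesInv P) (X : Set (I × G × Λ)) (iI, a, lL) :=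
    CSClosure.base (by rw [hXc]; simp)
  have hm1 : Φ (iI, 1, l0) = (j0, (1:G), lL) := by
    rw [hΦe _ hmem1, hφ1]
  have hm2 : Φ (iI, P l0 i0, lL) = (j0, a * b⁻¹, m0) := by
    rw [← ha, hΦe _ hmem2, hφ2]
  obtain ⟨ii, hc⟩ := extract_entry P iI lL hrow Φ hΦm l0 i0 hm1 hm2
  rw [hrow ii, one_mul] at hc
  refine ⟨m0, ii, ?_⟩
  rw [← inv_inv (P m0 ii), ← hc, mul_inv_rev, inv_inv]

end Aux6

theorem rees_entries_subgroup_aux {G I Λ : Type*} [Group G] [Countable G]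
    [Countable I] [Countable Λ]
    (P : Λ → I → G) (iI : I) (lL : Λ)
    (hrow : ∀ j : I, P lL j = 1) (hcol : ∀ m : Λ, P m iI = 1)
    (hhom : IsCSHomogeneous (reesMul P) (reesInv P)) :
    (1 ∈ reesEntries P ∧ (∀ a ∈ reesEntries P, ∀ b ∈ reesEntries P, a * b ∈ reesEntries P)
      ∧ (∀ a ∈ reesEntries P, a⁻¹ ∈ reesEntries P)
      ∧ ∀ θ : G ≃* G, θ '' reesEntries P = reesEntries P) := by
  refine ⟨⟨lL, iI, hrow iI⟩, ?_, ?_, ?_⟩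
  · rintro a ⟨l, i, rfl⟩ b ⟨m, j, rfl⟩
    obtain ⟨m', j', hinv⟩ := inv_entry P iI lL hrow hcol hhom m j
    have h := prod_entry P iI lL hrow hcol hhom m' j' l i
    rwa [hinv, inv_inv] at h
  · rintro a ⟨l, i, rfl⟩
    exact inv_entry P iI lL hrow hcol hhom l i
  · intro θ
    apply Set.Subset.antisymm
    · rintro _ ⟨g, ⟨l, i, rfl⟩, rfl⟩
      exact theta_entry P iI lL hrow hcol hhom θ l i
    · rintro g ⟨l, i, rfl⟩
      exact ⟨θ.symm (P l i), theta_entry P iI lL hrow hcol hhom θ.symm l i, by simp⟩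


/-- If a normalised Rees matrix semigroup `S = M[G;I,Λ;P]` (countable
group, countable index sets) is homogeneous as a completely simple semigroup, then the
entry set `G^P` is a characteristic subgroup of `G`. -/
theorem rees_homogeneous_entries_characteristic {G I Λ : Type*} [Group G] [Countable G]
    [Countable I] [Countable Λ]
    (P : Λ → I → G) (iI : I) (lL : Λ)
    (hrow : ∀ j : I, P lL j = 1) (hcol : ∀ m : Λ, P m iI = 1)
    (hhom : IsCSHomogeneous (reesMul P) (reesInv P)) :
    IsCharacteristicSubgroupSet (reesEntries P) := by
  exact rees_entries_subgroup_aux P iI lL hrow hcol hhom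
end

section
/- Let S = M[G;I,Λ;P] be a normalised Rees matrix semigroup over a countable group G with countable index sets I, Λ, which is homogeneous as a completely simple semigroup, and suppose the set of entries G^P is infinite. Then the induced edge-coloured bipartite graph Γ(S) — with left set Λ' = Λ∖{1_Λ}, right set I' = I∖{1_I}, and edge (λ,i) coloured by P(λ,i) — has colour set exactly G^P (every element of G^P occurs as P(λ,i) for some λ ∈ Λ', i ∈ I') and is G^P-generic. -/
section Machinery

variable {G I Λ : Type*} [Group G]

open Finset in
/-- Configuration finset supported on a single column `x`. -/
noncomputable def colCfg (P : Λ → I → G) (x : I) (b : Λ) (T : Finset G) (L : Finset Λ) :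
    Finset (I × G × Λ) := by
  classical exact T.image (fun t => (x, t, b)) ∪ L.image (fun l => (x, 1, l))

lemma mem_colCfg {P : Λ → I → G} {x : I} {b : Λ} {T : Finset G} {L : Finset Λ}
    {s : I × G × Λ} :
    s ∈ colCfg P x b T L ↔ (∃ t ∈ T, s = (x, t, b)) ∨ ∃ l ∈ L, s = (x, 1, l) := by
  classical
  simp [colCfg, eq_comm]

open Finset in
/-- Configuration finset supported on a single row `y`. -/
noncomputable def rowCfg (P : Λ → I → G) (y : Λ) (b : I) (T : Finset G) (L : Finset I) :
    Finset (I × G × Λ) := by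
  classical exact T.image (fun t => (b, t, y)) ∪ L.image (fun i => (i, 1, y))

lemma mem_rowCfg {P : Λ → I → G} {y : Λ} {b : I} {T : Finset G} {L : Finset I}
    {s : I × G × Λ} :
    s ∈ rowCfg P y b T L ↔ (∃ t ∈ T, s = (b, t, y)) ∨ ∃ i ∈ L, s = (i, 1, y) := by
  classical
  simp [rowCfg, eq_comm]

lemma closure_colCfg (P : Λ → I → G) {x : I} {b : Λ} {T : Finset G} {L : Finset Λ}
    (hb : b ∈ L) (hPb : P b x = 1)
    (hPx : ∀ l ∈ L, P l x ∈ Subgroup.closure (T : Set G)) :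
    {s | CSClosure (reesMul P) (reesInv P) (↑(colCfg P x b T L) : Set (I × G × Λ)) s} =
      {s : I × G × Λ | s.1 = x ∧ s.2.1 ∈ Subgroup.closure (T : Set G) ∧ s.2.2 ∈ L} := by
  ext s
  constructor
  · intro hs
    induction hs with
    | base h =>
      rcases mem_colCfg.mp h with ⟨t, ht, rfl⟩ | ⟨l, hl, rfl⟩
      · exact ⟨rfl, Subgroup.subset_closure ht, hb⟩
      · exact ⟨rfl, one_mem _, hl⟩
    | @mul a c _ _ iha ihc =>
      exact ⟨iha.1,
        mul_mem (mul_mem iha.2.1 (by rw [ihc.1]; exact hPx _ iha.2.2)) ihc.2.1, ihc.2.2⟩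
    | @inv a _ iha =>
      refine ⟨iha.1, ?_, iha.2.2⟩
      have hp : P a.2.2 a.1 ∈ Subgroup.closure (T : Set G) := by
        rw [iha.1]; exact hPx _ iha.2.2
      exact mul_mem (mul_mem (inv_mem hp) (inv_mem iha.2.1)) (inv_mem hp)
  · rintro ⟨h1, h2, h3⟩
    obtain ⟨s1, s2, s3⟩ := s
    dsimp at h1 h2 h3
    obtain rfl := h1.symm
    have base_l : ∀ l ∈ L,
        CSClosure (reesMul P) (reesInv P) (↑(colCfg P x b T L) : Set (I × G × Λ)) (x, 1, l) :=
      fun l hl => CSClosure.base (mem_colCfg.mpr (Or.inr ⟨l, hl, rfl⟩))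
    have key : ∀ h : G, h ∈ Subgroup.closure (T : Set G) →
        CSClosure (reesMul P) (reesInv P) (↑(colCfg P x b T L) : Set (I × G × Λ)) (x, h, b) := by
      intro h hh
      induction hh using Subgroup.closure_induction with
      | mem t ht => exact CSClosure.base (mem_colCfg.mpr (Or.inl ⟨t, ht, rfl⟩))
      | one => exact base_l b hb
      | mul u v hu hv ihu ihv =>
        have := CSClosure.mul ihu ihv
        simpa [reesMul, hPb] using this
      | inv u hu ihu =>
        have := CSClosure.inv ihu
        simpa [reesInv, hPb] using this
    have := CSClosure.mul (key s2 h2) (base_l s3 h3)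
    simpa [reesMul, hPb] using this

lemma closure_rowCfg (P : Λ → I → G) {y : Λ} {b : I} {T : Finset G} {L : Finset I}
    (hb : b ∈ L) (hPb : P y b = 1)
    (hPx : ∀ i ∈ L, P y i ∈ Subgroup.closure (T : Set G)) :
    {s | CSClosure (reesMul P) (reesInv P) (↑(rowCfg P y b T L) : Set (I × G × Λ)) s} =
      {s : I × G × Λ | s.2.2 = y ∧ s.2.1 ∈ Subgroup.closure (T : Set G) ∧ s.1 ∈ L} := by
  ext s
  constructor
  · intro hs
    induction hs with
    | base h =>
      rcases mem_rowCfg.mp h with ⟨t, ht, rfl⟩ | ⟨i, hi, rfl⟩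
      · exact ⟨rfl, Subgroup.subset_closure ht, hb⟩
      · exact ⟨rfl, one_mem _, hi⟩
    | @mul a c _ _ iha ihc =>
      exact ⟨ihc.1,
        mul_mem (mul_mem iha.2.1 (by rw [iha.1]; exact hPx _ ihc.2.2)) ihc.2.1, iha.2.2⟩
    | @inv a _ iha =>
      refine ⟨iha.1, ?_, iha.2.2⟩
      have hp : P a.2.2 a.1 ∈ Subgroup.closure (T : Set G) := by
        rw [iha.1]; exact hPx _ iha.2.2
      exact mul_mem (mul_mem (inv_mem hp) (inv_mem iha.2.1)) (inv_mem hp)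
  · rintro ⟨h1, h2, h3⟩
    obtain ⟨s1, s2, s3⟩ := s
    dsimp at h1 h2 h3
    obtain rfl := h1.symm
    have base_l : ∀ i ∈ L,
        CSClosure (reesMul P) (reesInv P) (↑(rowCfg P y b T L) : Set (I × G × Λ)) (i, 1, y) :=
      fun i hi => CSClosure.base (mem_rowCfg.mpr (Or.inr ⟨i, hi, rfl⟩))
    have key : ∀ h : G, h ∈ Subgroup.closure (T : Set G) →
        CSClosure (reesMul P) (reesInv P) (↑(rowCfg P y b T L) : Set (I × G × Λ)) (b, h, y) := by
      intro h hh
      induction hh using Subgroup.closure_induction with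
      | mem t ht => exact CSClosure.base (mem_rowCfg.mpr (Or.inl ⟨t, ht, rfl⟩))
      | one => exact base_l b hb
      | mul u v hu hv ihu ihv =>
        have := CSClosure.mul ihu ihv
        simpa [reesMul, hPb] using this
      | inv u hu ihu =>
        have := CSClosure.inv ihu
        simpa [reesInv, hPb] using this
    have := CSClosure.mul (base_l s1 h3) (key s2 h2)
    simpa [reesMul, hPb] using this

end Machinery
section Ops

variable {G I Λ : Type*} [Group G] {P : Λ → I → G} {iI : I} {lL : Λ}

/-- An idempotent with third coordinate `lL` has trivial middle coordinate. -/
lemma idem_mid_row (hrow : ∀ j : I, P lL j = 1) {F : I × G × Λ}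
    (hidem : reesMul P F F = F) (h3 : F.2.2 = lL) : F.2.1 = 1 := by
  have hm : F.2.1 * P F.2.2 F.1 * F.2.1 = F.2.1 := congrArg (·.2.1) hidem
  rw [h3, hrow, mul_one] at hm
  exact mul_eq_right.mp hm

/-- An idempotent with first coordinate `iI` has trivial middle coordinate. -/
lemma idem_mid_col (hcol : ∀ m : Λ, P m iI = 1) {F : I × G × Λ}
    (hidem : reesMul P F F = F) (h1 : F.1 = iI) : F.2.1 = 1 := by
  have hm : F.2.1 * P F.2.2 F.1 * F.2.1 = F.2.1 := congrArg (·.2.1) hidem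
  rw [h1, hcol, mul_one] at hm
  exact mul_eq_right.mp hm

lemma prod_ext3 {a : I} {b : G} {c : Λ} {p : I × G × Λ}
    (h1 : p.1 = a) (h2 : p.2.1 = b) (h3 : p.2.2 = c) : p = (a, b, c) := by
  obtain ⟨p1, p2, p3⟩ := p
  dsimp at h1 h2 h3
  rw [h1, h2, h3]

/-- **OP2**: pointwise quotient of two columns is realised by a column,
at any finite set of rows. -/
lemma op2 (hrow : ∀ j : I, P lL j = 1) (hcol : ∀ m : Λ, P m iI = 1)
    (hhom : IsCSHomogeneous (reesMul P) (reesInv P))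
    (x y : I) {n : ℕ} (rows : Fin n → Λ) :
    ∃ j : I, ∀ k, P (rows k) j = (P (rows k) x)⁻¹ * P (rows k) y := by
  classical
  set L : Finset Λ := insert lL (Finset.image rows Finset.univ) with hLdef
  set T : Finset G := (Finset.image (fun k => P (rows k) x) Finset.univ) ∪
      (Finset.image (fun k => P (rows k) y) Finset.univ) with hTdef
  have hTx : ∀ k, P (rows k) x ∈ Subgroup.closure (T : Set G) := fun k =>
    Subgroup.subset_closure (by simp [hTdef])
  have hTy : ∀ k, P (rows k) y ∈ Subgroup.closure (T : Set G) := fun k =>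
    Subgroup.subset_closure (by simp [hTdef])
  have hPxH : ∀ l ∈ L, P l x ∈ Subgroup.closure (T : Set G) := by
    intro l hl
    rcases Finset.mem_insert.mp hl with rfl | hl
    · rw [hrow]; exact one_mem _
    · obtain ⟨k, _, rfl⟩ := Finset.mem_image.mp hl
      exact hTx k
  have hPiH : ∀ l ∈ L, P l iI ∈ Subgroup.closure (T : Set G) := fun l _ => by
    rw [hcol]; exact one_mem _
  have hbL : lL ∈ L := Finset.mem_insert_self _ _
  have hrL : ∀ k, rows k ∈ L := fun k =>
    Finset.mem_insert_of_mem (Finset.mem_image.mpr ⟨k, Finset.mem_univ _, rfl⟩)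
  set X : Finset (I × G × Λ) := colCfg P x lL T L with hXdef
  set Y : Finset (I × G × Λ) := colCfg P iI lL T L with hYdef
  have CLdom := closure_colCfg P hbL (hrow x) hPxH
  have CLtgt := closure_colCfg P hbL (hrow iI) hPiH
  set φ : I × G × Λ → I × G × Λ := fun s => (iI, s.2.1 * P s.2.2 x, s.2.2) with hφdef
  have hbij : Set.BijOn φ
      {s : I × G × Λ | s.1 = x ∧ s.2.1 ∈ Subgroup.closure (T : Set G) ∧ s.2.2 ∈ L}
      {s : I × G × Λ | s.1 = iI ∧ s.2.1 ∈ Subgroup.closure (T : Set G) ∧ s.2.2 ∈ L} := by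
    refine ⟨fun s hs => ⟨rfl, mul_mem hs.2.1 (hPxH _ hs.2.2), hs.2.2⟩, ?_, ?_⟩
    · rintro ⟨s1, s2, s3⟩ ⟨hs1, hs2, hs3⟩ ⟨t1, t2, t3⟩ ⟨ht1, ht2, ht3⟩ he
      simp only [hφdef, Prod.mk.injEq] at he
      obtain ⟨-, he2, rfl⟩ := he
      dsimp at hs1 ht1
      rw [hs1, ht1, mul_right_cancel he2]
    · rintro ⟨s1, s2, s3⟩ ⟨hs1, hs2, hs3⟩
      dsimp at hs1 hs2 hs3
      refine ⟨(x, s2 * (P s3 x)⁻¹, s3), ⟨rfl, mul_mem hs2 (inv_mem (hPxH _ hs3)), hs3⟩, ?_⟩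
      simp [hφdef, hs1]
  have hmulφ : ∀ a c : I × G × Λ,
      CSClosure (reesMul P) (reesInv P) (↑X : Set (I × G × Λ)) a →
      CSClosure (reesMul P) (reesInv P) (↑X : Set (I × G × Λ)) c →
      φ (reesMul P a c) = reesMul P (φ a) (φ c) := by
    intro a c ha hc
    have ha' := (Set.ext_iff.mp CLdom a).mp ha
    have hc' := (Set.ext_iff.mp CLdom c).mp hc
    simp [hφdef, reesMul, hcol, hc'.1, mul_assoc]
  obtain ⟨Φ, hΦbij, hΦmul, hΦeq⟩ := hhom X Y φ (by rw [CLdom, CLtgt]; exact hbij) hmulφ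
  have hpin : ∀ s : I × G × Λ, s.1 = x → s.2.1 ∈ Subgroup.closure (T : Set G) → s.2.2 ∈ L →
      Φ s = (iI, s.2.1 * P s.2.2 x, s.2.2) := by
    intro s h1 h2 h3
    rw [hΦeq s ((Set.ext_iff.mp CLdom s).mpr ⟨h1, h2, h3⟩)]
  set Ey : I × G × Λ := (y, 1, lL) with hEydef
  have hEy : reesMul P Ey Ey = Ey := by simp [hEydef, reesMul, hrow]
  have hFidem : reesMul P (Φ Ey) (Φ Ey) = Φ Ey := by
    have h := hΦmul Ey Ey; rw [hEy] at h; exact h.symm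
  have hx1 : Φ (x, 1, lL) = (iI, 1, lL) := by
    rw [hpin (x, 1, lL) rfl (one_mem _) hbL]; simp [hrow]
  have hF3 : (Φ Ey).2.2 = lL := by
    have h := hΦmul Ey (x, 1, lL)
    rw [show reesMul P Ey (x, 1, lL) = Ey by simp [hEydef, reesMul, hrow], hx1] at h
    exact congrArg (·.2.2) h
  have hF2 : (Φ Ey).2.1 = 1 := idem_mid_row hrow hFidem hF3
  refine ⟨(Φ Ey).1, fun k => ?_⟩
  have hAk : reesMul P (x, (P (rows k) x)⁻¹, rows k) Ey =
      (x, (P (rows k) x)⁻¹ * P (rows k) y, lL) := by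
    simp [hEydef, reesMul]
  have h1 := hΦmul (x, (P (rows k) x)⁻¹, rows k) Ey
  rw [hAk] at h1
  rw [hpin _ rfl (mul_mem (inv_mem (hTx k)) (hTy k)) hbL] at h1
  rw [hpin _ rfl (inv_mem (hTx k)) (hrL k)] at h1
  simp only [reesMul] at h1
  have h2 := congrArg (·.2.1) h1
  dsimp at h2
  rw [hrow, mul_one, inv_mul_cancel, one_mul, hF2, mul_one] at h2
  exact h2.symm
  
end Ops
section Ops2

variable {G I Λ : Type*} [Group G] {P : Λ → I → G} {iI : I} {lL : Λ}

/-- **OP1**: pattern transfer with base-point quotient, column version. -/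
lemma op1 (hrow : ∀ j : I, P lL j = 1) (hcol : ∀ m : Λ, P m iI = 1)
    (hhom : IsCSHomogeneous (reesMul P) (reesInv P))
    (w : I) {n : ℕ} (src : Fin n → Λ) (r : Λ) (tgt : Fin n → Λ)
    (hsinj : Function.Injective src) (hsr : ∀ k, src k ≠ r)
    (htinj : Function.Injective tgt) (htl : ∀ k, tgt k ≠ lL) :
    ∃ j : I, (w ≠ iI → j ≠ iI) ∧ ∀ k, P (tgt k) j = P (src k) w * (P r w)⁻¹ := by
  classical
  set c : Fin n → G := fun k => P (src k) w * (P r w)⁻¹ with hcdef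
  set T : Finset G := Finset.image c Finset.univ with hTdef
  have hTc : ∀ k, c k ∈ Subgroup.closure (T : Set G) := fun k =>
    Subgroup.subset_closure (by simp [hTdef])
  set L : Finset Λ := insert r (Finset.image src Finset.univ) with hLdef
  set L' : Finset Λ := insert lL (Finset.image tgt Finset.univ) with hL'def
  set ψ : Λ → Λ := fun l =>
    if h : ∃ k, src k = l then tgt (Classical.choose h) else if l = r then lL else l
    with hψdef
  have hψsrc : ∀ k, ψ (src k) = tgt k := by
    intro k
    have h : ∃ k', src k' = src k := ⟨k, rfl⟩
    simp only [hψdef, dif_pos h]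
    exact congrArg tgt (hsinj (Classical.choose_spec h))
  have hψr : ψ r = lL := by
    have h : ¬ ∃ k, src k = r := by
      rintro ⟨k, hk⟩; exact hsr k hk
    simp only [hψdef, dif_neg h]
    simp
  have hmemL : ∀ l, l ∈ L ↔ l = r ∨ ∃ k, src k = l := by
    intro l; simp [hLdef, eq_comm]
  have hmemL' : ∀ l, l ∈ L' ↔ l = lL ∨ ∃ k, tgt k = l := by
    intro l; simp [hL'def, eq_comm]
  have hmaps : ∀ l ∈ L, ψ l ∈ L' := by
    intro l hl
    rcases (hmemL l).mp hl with rfl | ⟨k, rfl⟩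
    · rw [hψr]; exact (hmemL' lL).mpr (Or.inl rfl)
    · rw [hψsrc]; exact (hmemL' _).mpr (Or.inr ⟨k, rfl⟩)
  have hinjL : ∀ l₁ ∈ L, ∀ l₂ ∈ L, ψ l₁ = ψ l₂ → l₁ = l₂ := by
    intro l₁ hl₁ l₂ hl₂ he
    rcases (hmemL l₁).mp hl₁ with rfl | ⟨k₁, rfl⟩ <;>
      rcases (hmemL l₂).mp hl₂ with rfl | ⟨k₂, rfl⟩
    · rfl
    · rw [hψr, hψsrc] at he; exact absurd he.symm (htl k₂)
    · rw [hψr, hψsrc] at he; exact absurd he (htl k₁)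
    · rw [hψsrc, hψsrc] at he; rw [htinj he]
  have hsurjL : ∀ l' ∈ L', ∃ l ∈ L, ψ l = l' := by
    intro l' hl'
    rcases (hmemL' l').mp hl' with rfl | ⟨k, rfl⟩
    · exact ⟨r, (hmemL r).mpr (Or.inl rfl), hψr⟩
    · exact ⟨src k, (hmemL _).mpr (Or.inr ⟨k, rfl⟩), hψsrc k⟩
  have hPiH : ∀ (M : Finset Λ), ∀ l ∈ M, P l iI ∈ Subgroup.closure (T : Set G) :=
    fun M l _ => by rw [hcol]; exact one_mem _
  have hbL : r ∈ L := Finset.mem_insert_self _ _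
  have hbL' : lL ∈ L' := Finset.mem_insert_self _ _
  have hsL : ∀ k, src k ∈ L := fun k => (hmemL _).mpr (Or.inr ⟨k, rfl⟩)
  set X : Finset (I × G × Λ) := colCfg P iI r T L with hXdef
  set Y : Finset (I × G × Λ) := colCfg P iI lL T L' with hYdef
  have CLdom := closure_colCfg P hbL (hcol r) (hPiH L)
  have CLtgt := closure_colCfg P hbL' (hcol lL) (hPiH L')
  set φ : I × G × Λ → I × G × Λ := fun s => (s.1, s.2.1, ψ s.2.2) with hφdef
  have hbij : Set.BijOn φ
      {s : I × G × Λ | s.1 = iI ∧ s.2.1 ∈ Subgroup.closure (T : Set G) ∧ s.2.2 ∈ L}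
      {s : I × G × Λ | s.1 = iI ∧ s.2.1 ∈ Subgroup.closure (T : Set G) ∧ s.2.2 ∈ L'} := by
    refine ⟨fun s hs => ⟨hs.1, hs.2.1, hmaps _ hs.2.2⟩, ?_, ?_⟩
    · rintro ⟨s1, s2, s3⟩ ⟨hs1, hs2, hs3⟩ ⟨t1, t2, t3⟩ ⟨ht1, ht2, ht3⟩ he
      simp only [hφdef, Prod.mk.injEq] at he
      obtain ⟨rfl, rfl, he3⟩ := he
      rw [hinjL s3 hs3 t3 ht3 he3]
    · rintro ⟨s1, s2, s3⟩ ⟨hs1, hs2, hs3⟩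
      dsimp at hs1 hs2 hs3
      obtain ⟨l, hl, hψl⟩ := hsurjL s3 hs3
      exact ⟨(s1, s2, l), ⟨hs1, hs2, hl⟩, by simp [hφdef, hψl]⟩
  have hmulφ : ∀ a c : I × G × Λ,
      CSClosure (reesMul P) (reesInv P) (↑X : Set (I × G × Λ)) a →
      CSClosure (reesMul P) (reesInv P) (↑X : Set (I × G × Λ)) c →
      φ (reesMul P a c) = reesMul P (φ a) (φ c) := by
    intro a c ha hc
    have ha' := (Set.ext_iff.mp CLdom a).mp ha
    have hc' := (Set.ext_iff.mp CLdom c).mp hc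
    simp [hφdef, reesMul, hcol, hc'.1, ha'.1]
  obtain ⟨Φ, hΦbij, hΦmul, hΦeq⟩ := hhom X Y φ (by rw [CLdom, CLtgt]; exact hbij) hmulφ
  have hpin : ∀ s : I × G × Λ, s.1 = iI → s.2.1 ∈ Subgroup.closure (T : Set G) → s.2.2 ∈ L →
      Φ s = (iI, s.2.1, ψ s.2.2) := by
    intro s h1 h2 h3
    rw [hΦeq s ((Set.ext_iff.mp CLdom s).mpr ⟨h1, h2, h3⟩)]
    simp [hφdef, h1]
  set Ew : I × G × Λ := (w, (P r w)⁻¹, r) with hEwdef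
  have hEwEw : reesMul P Ew Ew = Ew := by
    simp [hEwdef, reesMul, inv_mul_cancel]
  have hFidem : reesMul P (Φ Ew) (Φ Ew) = Φ Ew := by
    have h := hΦmul Ew Ew; rw [hEwEw] at h; exact h.symm
  have hI1 : Φ (iI, 1, r) = (iI, 1, lL) := by
    rw [hpin (iI, 1, r) rfl (one_mem _) hbL]; simp [hψr]
  have hF3 : (Φ Ew).2.2 = lL := by
    have h := hΦmul (w, (P r w)⁻¹, lL) (iI, 1, r)
    rw [show reesMul P (w, (P r w)⁻¹, lL) (iI, 1, r) = Ew by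
      simp [hEwdef, reesMul, hrow], hI1] at h
    exact congrArg (·.2.2) h
  have hF2 : (Φ Ew).2.1 = 1 := idem_mid_row hrow hFidem hF3
  refine ⟨(Φ Ew).1, ?_, fun k => ?_⟩
  · intro hw hj
    have hFull : Φ Ew = (iI, 1, lL) := prod_ext3 hj hF2 hF3
    have := hΦbij.1 (hFull.trans hI1.symm)
    exact hw (congrArg (·.1) this)
  · have hAk : reesMul P (iI, 1, src k) Ew = (iI, c k, r) := by
      simp [hEwdef, hcdef, reesMul, mul_assoc]
    have h1 := hΦmul (iI, 1, src k) Ew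
    rw [hAk] at h1
    rw [hpin _ rfl (hTc k) hbL] at h1
    rw [hpin _ rfl (one_mem _) (hsL k)] at h1
    rw [hψr, hψsrc] at h1
    simp only [reesMul] at h1
    have h2 := congrArg (·.2.1) h1
    dsimp at h2
    rw [hF2, mul_one, one_mul] at h2
    exact h2.symm

end Ops2
section Ops3

variable {G I Λ : Type*} [Group G] {P : Λ → I → G} {iI : I} {lL : Λ}

/-- **OP2'**: pointwise (right) quotient of two rows is realised by a row. -/
lemma op2' (hrow : ∀ j : I, P lL j = 1) (hcol : ∀ m : Λ, P m iI = 1)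
    (hhom : IsCSHomogeneous (reesMul P) (reesInv P))
    (x y : Λ) {n : ℕ} (cols : Fin n → I) :
    ∃ z : Λ, ∀ k, P z (cols k) = P y (cols k) * (P x (cols k))⁻¹ := by
  classical
  set L : Finset I := insert iI (Finset.image cols Finset.univ) with hLdef
  set T : Finset G := (Finset.image (fun k => P x (cols k)) Finset.univ) ∪
      (Finset.image (fun k => P y (cols k)) Finset.univ) with hTdef
  have hTx : ∀ k, P x (cols k) ∈ Subgroup.closure (T : Set G) := fun k =>
    Subgroup.subset_closure (by simp [hTdef])
  have hTy : ∀ k, P y (cols k) ∈ Subgroup.closure (T : Set G) := fun k =>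
    Subgroup.subset_closure (by simp [hTdef])
  have hPxH : ∀ i ∈ L, P x i ∈ Subgroup.closure (T : Set G) := by
    intro i hi
    rcases Finset.mem_insert.mp hi with rfl | hi
    · rw [hcol]; exact one_mem _
    · obtain ⟨k, _, rfl⟩ := Finset.mem_image.mp hi
      exact hTx k
  have hPlH : ∀ i ∈ L, P lL i ∈ Subgroup.closure (T : Set G) := fun i _ => by
    rw [hrow]; exact one_mem _
  have hbL : iI ∈ L := Finset.mem_insert_self _ _
  have hrL : ∀ k, cols k ∈ L := fun k =>
    Finset.mem_insert_of_mem (Finset.mem_image.mpr ⟨k, Finset.mem_univ _, rfl⟩)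
  set X : Finset (I × G × Λ) := rowCfg P x iI T L with hXdef
  set Y : Finset (I × G × Λ) := rowCfg P lL iI T L with hYdef
  have CLdom := closure_rowCfg P hbL (hcol x) hPxH
  have CLtgt := closure_rowCfg P hbL (hcol lL) hPlH
  set φ : I × G × Λ → I × G × Λ := fun s => (s.1, P x s.1 * s.2.1, lL) with hφdef
  have hbij : Set.BijOn φ
      {s : I × G × Λ | s.2.2 = x ∧ s.2.1 ∈ Subgroup.closure (T : Set G) ∧ s.1 ∈ L}
      {s : I × G × Λ | s.2.2 = lL ∧ s.2.1 ∈ Subgroup.closure (T : Set G) ∧ s.1 ∈ L} := by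
    refine ⟨fun s hs => ⟨rfl, mul_mem (hPxH _ hs.2.2) hs.2.1, hs.2.2⟩, ?_, ?_⟩
    · rintro ⟨s1, s2, s3⟩ ⟨hs1, hs2, hs3⟩ ⟨t1, t2, t3⟩ ⟨ht1, ht2, ht3⟩ he
      simp only [hφdef, Prod.mk.injEq] at he
      obtain ⟨rfl, he2, -⟩ := he
      dsimp at hs1 ht1
      rw [hs1, ht1, mul_left_cancel he2]
    · rintro ⟨s1, s2, s3⟩ ⟨hs1, hs2, hs3⟩
      dsimp at hs1 hs2 hs3
      refine ⟨(s1, (P x s1)⁻¹ * s2, x), ⟨rfl, mul_mem (inv_mem (hPxH _ hs3)) hs2, hs3⟩, ?_⟩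
      simp [hφdef, hs1]
  have hmulφ : ∀ a c : I × G × Λ,
      CSClosure (reesMul P) (reesInv P) (↑X : Set (I × G × Λ)) a →
      CSClosure (reesMul P) (reesInv P) (↑X : Set (I × G × Λ)) c →
      φ (reesMul P a c) = reesMul P (φ a) (φ c) := by
    intro a c ha hc
    have ha' := (Set.ext_iff.mp CLdom a).mp ha
    have hc' := (Set.ext_iff.mp CLdom c).mp hc
    simp [hφdef, reesMul, hrow, ha'.1, mul_assoc]
  obtain ⟨Φ, hΦbij, hΦmul, hΦeq⟩ := hhom X Y φ (by rw [CLdom, CLtgt]; exact hbij) hmulφ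
  have hpin : ∀ s : I × G × Λ, s.2.2 = x → s.2.1 ∈ Subgroup.closure (T : Set G) → s.1 ∈ L →
      Φ s = (s.1, P x s.1 * s.2.1, lL) := by
    intro s h1 h2 h3
    rw [hΦeq s ((Set.ext_iff.mp CLdom s).mpr ⟨h1, h2, h3⟩)]
  set Ey : I × G × Λ := (iI, 1, y) with hEydef
  have hEy : reesMul P Ey Ey = Ey := by simp [hEydef, reesMul, hcol]
  have hFidem : reesMul P (Φ Ey) (Φ Ey) = Φ Ey := by
    have h := hΦmul Ey Ey; rw [hEy] at h; exact h.symm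
  have hx1 : Φ (iI, 1, x) = (iI, 1, lL) := by
    rw [hpin (iI, 1, x) rfl (one_mem _) hbL]; simp [hcol]
  have hF1 : (Φ Ey).1 = iI := by
    have h := hΦmul (iI, 1, x) Ey
    rw [show reesMul P (iI, 1, x) Ey = Ey by simp [hEydef, reesMul, hcol], hx1] at h
    exact congrArg (·.1) h
  have hF2 : (Φ Ey).2.1 = 1 := idem_mid_col hcol hFidem hF1
  refine ⟨(Φ Ey).2.2, fun k => ?_⟩
  have hAk : reesMul P Ey (cols k, (P x (cols k))⁻¹, x) =
      (iI, P y (cols k) * (P x (cols k))⁻¹, x) := by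
    simp [hEydef, reesMul]
  have h1 := hΦmul Ey (cols k, (P x (cols k))⁻¹, x)
  rw [hAk] at h1
  rw [hpin (iI, P y (cols k) * (P x (cols k))⁻¹, x) rfl
    (mul_mem (hTy k) (inv_mem (hTx k))) hbL] at h1
  rw [hpin (cols k, (P x (cols k))⁻¹, x) rfl (inv_mem (hTx k)) (hrL k)] at h1
  simp only [reesMul] at h1
  have h2 := congrArg (·.2.1) h1
  dsimp at h2
  rw [hcol, one_mul, mul_inv_cancel, mul_one, hF2, one_mul] at h2
  exact h2.symm

/-- **OP1'**: pattern transfer with base-point quotient, row version. -/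
lemma op1' (hrow : ∀ j : I, P lL j = 1) (hcol : ∀ m : Λ, P m iI = 1)
    (hhom : IsCSHomogeneous (reesMul P) (reesInv P))
    (w : Λ) {n : ℕ} (src : Fin n → I) (r : I) (tgt : Fin n → I)
    (hsinj : Function.Injective src) (hsr : ∀ k, src k ≠ r)
    (htinj : Function.Injective tgt) (htl : ∀ k, tgt k ≠ iI) :
    ∃ z : Λ, (w ≠ lL → z ≠ lL) ∧ ∀ k, P z (tgt k) = (P w r)⁻¹ * P w (src k) := by
  classical
  set c : Fin n → G := fun k => (P w r)⁻¹ * P w (src k) with hcdef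
  set T : Finset G := Finset.image c Finset.univ with hTdef
  have hTc : ∀ k, c k ∈ Subgroup.closure (T : Set G) := fun k =>
    Subgroup.subset_closure (by simp [hTdef])
  set L : Finset I := insert r (Finset.image src Finset.univ) with hLdef
  set L' : Finset I := insert iI (Finset.image tgt Finset.univ) with hL'def
  set ψ : I → I := fun i =>
    if h : ∃ k, src k = i then tgt (Classical.choose h) else if i = r then iI else i
    with hψdef
  have hψsrc : ∀ k, ψ (src k) = tgt k := by
    intro k
    have h : ∃ k', src k' = src k := ⟨k, rfl⟩
    simp only [hψdef, dif_pos h]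
    exact congrArg tgt (hsinj (Classical.choose_spec h))
  have hψr : ψ r = iI := by
    have h : ¬ ∃ k, src k = r := by
      rintro ⟨k, hk⟩; exact hsr k hk
    simp only [hψdef, dif_neg h]
    simp
  have hmemL : ∀ i, i ∈ L ↔ i = r ∨ ∃ k, src k = i := by
    intro i; simp [hLdef, eq_comm]
  have hmemL' : ∀ i, i ∈ L' ↔ i = iI ∨ ∃ k, tgt k = i := by
    intro i; simp [hL'def, eq_comm]
  have hmaps : ∀ i ∈ L, ψ i ∈ L' := by
    intro i hi
    rcases (hmemL i).mp hi with rfl | ⟨k, rfl⟩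
    · rw [hψr]; exact (hmemL' iI).mpr (Or.inl rfl)
    · rw [hψsrc]; exact (hmemL' _).mpr (Or.inr ⟨k, rfl⟩)
  have hinjL : ∀ i₁ ∈ L, ∀ i₂ ∈ L, ψ i₁ = ψ i₂ → i₁ = i₂ := by
    intro i₁ hi₁ i₂ hi₂ he
    rcases (hmemL i₁).mp hi₁ with rfl | ⟨k₁, rfl⟩ <;>
      rcases (hmemL i₂).mp hi₂ with rfl | ⟨k₂, rfl⟩
    · rfl
    · rw [hψr, hψsrc] at he; exact absurd he.symm (htl k₂)
    · rw [hψr, hψsrc] at he; exact absurd he (htl k₁)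
    · rw [hψsrc, hψsrc] at he; rw [htinj he]
  have hsurjL : ∀ i' ∈ L', ∃ i ∈ L, ψ i = i' := by
    intro i' hi'
    rcases (hmemL' i').mp hi' with rfl | ⟨k, rfl⟩
    · exact ⟨r, (hmemL r).mpr (Or.inl rfl), hψr⟩
    · exact ⟨src k, (hmemL _).mpr (Or.inr ⟨k, rfl⟩), hψsrc k⟩
  have hPlH : ∀ (M : Finset I), ∀ i ∈ M, P lL i ∈ Subgroup.closure (T : Set G) :=
    fun M i _ => by rw [hrow]; exact one_mem _
  have hbL : r ∈ L := Finset.mem_insert_self _ _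
  have hbL' : iI ∈ L' := Finset.mem_insert_self _ _
  have hsL : ∀ k, src k ∈ L := fun k => (hmemL _).mpr (Or.inr ⟨k, rfl⟩)
  set X : Finset (I × G × Λ) := rowCfg P lL r T L with hXdef
  set Y : Finset (I × G × Λ) := rowCfg P lL iI T L' with hYdef
  have CLdom := closure_rowCfg P hbL (hrow r) (hPlH L)
  have CLtgt := closure_rowCfg P hbL' (hrow iI) (hPlH L')
  set φ : I × G × Λ → I × G × Λ := fun s => (ψ s.1, s.2.1, s.2.2) with hφdef
  have hbij : Set.BijOn φ
      {s : I × G × Λ | s.2.2 = lL ∧ s.2.1 ∈ Subgroup.closure (T : Set G) ∧ s.1 ∈ L}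
      {s : I × G × Λ | s.2.2 = lL ∧ s.2.1 ∈ Subgroup.closure (T : Set G) ∧ s.1 ∈ L'} := by
    refine ⟨fun s hs => ⟨hs.1, hs.2.1, hmaps _ hs.2.2⟩, ?_, ?_⟩
    · rintro ⟨s1, s2, s3⟩ ⟨hs1, hs2, hs3⟩ ⟨t1, t2, t3⟩ ⟨ht1, ht2, ht3⟩ he
      simp only [hφdef, Prod.mk.injEq] at he
      obtain ⟨he1, rfl, rfl⟩ := he
      rw [hinjL s1 hs3 t1 ht3 he1]
    · rintro ⟨s1, s2, s3⟩ ⟨hs1, hs2, hs3⟩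
      dsimp at hs1 hs2 hs3
      obtain ⟨i, hi, hψi⟩ := hsurjL s1 hs3
      exact ⟨(i, s2, s3), ⟨hs1, hs2, hi⟩, by simp [hφdef, hψi]⟩
  have hmulφ : ∀ a c : I × G × Λ,
      CSClosure (reesMul P) (reesInv P) (↑X : Set (I × G × Λ)) a →
      CSClosure (reesMul P) (reesInv P) (↑X : Set (I × G × Λ)) c →
      φ (reesMul P a c) = reesMul P (φ a) (φ c) := by
    intro a c ha hc
    have ha' := (Set.ext_iff.mp CLdom a).mp ha
    have hc' := (Set.ext_iff.mp CLdom c).mp hc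
    simp [hφdef, reesMul, hrow, ha'.1]
  obtain ⟨Φ, hΦbij, hΦmul, hΦeq⟩ := hhom X Y φ (by rw [CLdom, CLtgt]; exact hbij) hmulφ
  have hpin : ∀ s : I × G × Λ, s.2.2 = lL → s.2.1 ∈ Subgroup.closure (T : Set G) → s.1 ∈ L →
      Φ s = (ψ s.1, s.2.1, lL) := by
    intro s h1 h2 h3
    rw [hΦeq s ((Set.ext_iff.mp CLdom s).mpr ⟨h1, h2, h3⟩)]
    simp [hφdef, h1, Prod.ext_iff]
  set Ew : I × G × Λ := (r, (P w r)⁻¹, w) with hEwdef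
  have hEwEw : reesMul P Ew Ew = Ew := by
    simp [hEwdef, reesMul, inv_mul_cancel]
  have hFidem : reesMul P (Φ Ew) (Φ Ew) = Φ Ew := by
    have h := hΦmul Ew Ew; rw [hEwEw] at h; exact h.symm
  have hI1 : Φ (r, 1, lL) = (iI, 1, lL) := by
    rw [hpin (r, 1, lL) rfl (one_mem _) hbL]; simp [hψr]
  have hF1 : (Φ Ew).1 = iI := by
    have h := hΦmul (r, 1, lL) (iI, (P w r)⁻¹, w)
    rw [show reesMul P (r, 1, lL) (iI, (P w r)⁻¹, w) = Ew by
      simp [hEwdef, reesMul, hrow], hI1] at h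
    exact congrArg (·.1) h
  have hF2 : (Φ Ew).2.1 = 1 := idem_mid_col hcol hFidem hF1
  refine ⟨(Φ Ew).2.2, ?_, fun k => ?_⟩
  · intro hw hz
    have hFull : Φ Ew = (iI, 1, lL) := prod_ext3 hF1 hF2 hz
    have := hΦbij.1 (hFull.trans hI1.symm)
    exact hw (congrArg (·.2.2) this)
  · have hAk : reesMul P Ew (src k, 1, lL) = (r, c k, lL) := by
      simp [hEwdef, hcdef, reesMul, mul_assoc]
    have h1 := hΦmul Ew (src k, 1, lL)
    rw [hAk] at h1
    rw [hpin (r, c k, lL) rfl (hTc k) hbL] at h1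
    rw [hpin (src k, 1, lL) rfl (one_mem _) (hsL k)] at h1
    rw [hψr, hψsrc] at h1
    simp only [reesMul] at h1
    have h2 := congrArg (·.2.1) h1
    dsimp at h2
    rw [hF2, one_mul, mul_one] at h2
    exact h2.symm

end Ops3
section Helpers

lemma snoc_inj {α : Type*} {n : ℕ} {f : Fin n → α} {a : α}
    (hf : Function.Injective f) (ha : ∀ k, f k ≠ a) :
    Function.Injective (Fin.snoc f a) := by
  intro i j h
  induction i using Fin.lastCases with
  | last =>
    induction j using Fin.lastCases with
    | last => rfl
    | cast j =>
      rw [Fin.snoc_last, Fin.snoc_castSucc] at h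
      exact absurd h.symm (ha j)
  | cast i =>
    induction j using Fin.lastCases with
    | last =>
      rw [Fin.snoc_last, Fin.snoc_castSucc] at h
      exact absurd h (ha i)
    | cast j =>
      rw [Fin.snoc_castSucc, Fin.snoc_castSucc] at h
      rw [hf h]

lemma exists_fresh_fun {α : Type*} {s : Set α} (hs : s.Infinite) (n : ℕ) (F : Finset α) :
    ∃ f : Fin n → α, Function.Injective f ∧ ∀ k, f k ∈ s ∧ f k ∉ F := by
  classical
  induction n generalizing F with
  | zero => exact ⟨fun k => k.elim0, fun k => k.elim0, fun k => k.elim0⟩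
  | succ m ih =>
    obtain ⟨f, hfi, hfm⟩ := ih F
    have hinf : (s \ ↑(F ∪ Finset.image f Finset.univ)).Infinite :=
      hs.diff (Finset.finite_toSet _)
    obtain ⟨a, has, han⟩ := hinf.nonempty
    have hanF : a ∉ F := fun h => han (Finset.mem_coe.mpr (Finset.mem_union_left _ h))
    have hanf : ∀ k, f k ≠ a := fun k hk => han (Finset.mem_coe.mpr
      (Finset.mem_union_right _ (Finset.mem_image.mpr ⟨k, Finset.mem_univ _, hk⟩)))
    refine ⟨Fin.snoc f a, snoc_inj hfi hanf, fun k => ?_⟩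
    induction k using Fin.lastCases with
    | last => rw [Fin.snoc_last]; exact ⟨has, hanF⟩
    | cast k =>
      rw [Fin.snoc_castSucc]
      exact hfm k

end Helpers

section Entries

variable {G I Λ : Type*} [Group G] {P : Λ → I → G} {iI : I} {lL : Λ}

lemma one_mem_entries (hrow : ∀ j : I, P lL j = 1) (hcol : ∀ m : Λ, P m iI = 1) :
    (1 : G) ∈ reesEntries P := ⟨lL, iI, hrow iI⟩

lemma exists_ne_one_entry (hinf : (reesEntries P).Infinite) :
    ∃ g ∈ reesEntries P, g ≠ 1 := by
  obtain ⟨g, hg⟩ := (hinf.diff (Set.finite_singleton 1)).nonempty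
  exact ⟨g, hg.1, by simpa using hg.2⟩

lemma exists_row_ne (hrow : ∀ j : I, P lL j = 1) (hinf : (reesEntries P).Infinite) :
    ∃ l : Λ, l ≠ lL := by
  obtain ⟨g, ⟨l, i, rfl⟩, hg⟩ := exists_ne_one_entry hinf
  exact ⟨l, fun h => hg (by rw [h, hrow])⟩

lemma exists_col_ne (hcol : ∀ m : Λ, P m iI = 1) (hinf : (reesEntries P).Infinite) :
    ∃ i : I, i ≠ iI := by
  obtain ⟨g, ⟨l, i, rfl⟩, hg⟩ := exists_ne_one_entry hinf
  exact ⟨i, fun h => hg (by rw [h, hcol])⟩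

/-- Every entry is realised in every nontrivial row. -/
lemma realize_single (hrow : ∀ j : I, P lL j = 1) (hcol : ∀ m : Λ, P m iI = 1)
    (hhom : IsCSHomogeneous (reesMul P) (reesInv P))
    {g : G} (hg : g ∈ reesEntries P) {μ : Λ} (hμ : μ ≠ lL) :
    ∃ x : I, P μ x = g := by
  obtain ⟨ν, y, rfl⟩ := hg
  by_cases hν : ν = lL
  · subst hν; exact ⟨iI, by rw [hcol, hrow]⟩
  · obtain ⟨j, -, hj⟩ := op1 hrow hcol hhom y (fun _ : Fin 1 => ν) lL (fun _ => μ)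
      (fun a b _ => Subsingleton.elim a b) (fun _ => hν)
      (fun a b _ => Subsingleton.elim a b) (fun _ => hμ)
    refine ⟨j, ?_⟩
    have := hj 0
    rwa [hrow, inv_one, mul_one] at this

/-- Every entry is realised in every nontrivial column. -/
lemma realize_single' (hrow : ∀ j : I, P lL j = 1) (hcol : ∀ m : Λ, P m iI = 1)
    (hhom : IsCSHomogeneous (reesMul P) (reesInv P))
    {g : G} (hg : g ∈ reesEntries P) {ξ : I} (hξ : ξ ≠ iI) :
    ∃ z : Λ, P z ξ = g := by
  obtain ⟨ν, y, rfl⟩ := hg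
  by_cases hy : y = iI
  · subst hy; exact ⟨lL, by rw [hrow, hcol]⟩
  · obtain ⟨z, -, hz⟩ := op1' hrow hcol hhom ν (fun _ : Fin 1 => y) iI (fun _ => ξ)
      (fun a b _ => Subsingleton.elim a b) (fun _ => hy)
      (fun a b _ => Subsingleton.elim a b) (fun _ => hξ)
    refine ⟨z, ?_⟩
    have := hz 0
    rwa [hcol, inv_one, one_mul] at this

lemma entries_inv_mul (hrow : ∀ j : I, P lL j = 1) (hcol : ∀ m : Λ, P m iI = 1)
    (hhom : IsCSHomogeneous (reesMul P) (reesInv P)) (hinf : (reesEntries P).Infinite)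
    {a b : G} (ha : a ∈ reesEntries P) (hb : b ∈ reesEntries P) :
    a⁻¹ * b ∈ reesEntries P := by
  obtain ⟨μ, hμ⟩ := exists_row_ne hrow hinf
  obtain ⟨x, hx⟩ := realize_single hrow hcol hhom ha hμ
  obtain ⟨y, hy⟩ := realize_single hrow hcol hhom hb hμ
  obtain ⟨j, hj⟩ := op2 hrow hcol hhom x y (fun _ : Fin 1 => μ)
  exact ⟨μ, j, by rw [hj 0, hx, hy]⟩

lemma entries_mul_inv (hrow : ∀ j : I, P lL j = 1) (hcol : ∀ m : Λ, P m iI = 1)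
    (hhom : IsCSHomogeneous (reesMul P) (reesInv P)) (hinf : (reesEntries P).Infinite)
    {a b : G} (ha : a ∈ reesEntries P) (hb : b ∈ reesEntries P) :
    b * a⁻¹ ∈ reesEntries P := by
  obtain ⟨ξ, hξ⟩ := exists_col_ne hcol hinf
  obtain ⟨x, hx⟩ := realize_single' hrow hcol hhom ha hξ
  obtain ⟨y, hy⟩ := realize_single' hrow hcol hhom hb hξ
  obtain ⟨z, hz⟩ := op2' hrow hcol hhom x y (fun _ : Fin 1 => ξ)
  exact ⟨z, ξ, by rw [hz 0, hx, hy]⟩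

lemma infinite_col (hrow : ∀ j : I, P lL j = 1) (hcol : ∀ m : Λ, P m iI = 1)
    (hhom : IsCSHomogeneous (reesMul P) (reesInv P)) (hinf : (reesEntries P).Infinite) :
    Infinite {i : I // i ≠ iI} := by
  obtain ⟨μ, hμ⟩ := exists_row_ne hrow hinf
  have hinf' : (reesEntries P \ {1}).Infinite := hinf.diff (Set.finite_singleton 1)
  haveI := hinf'.to_subtype
  have H : ∀ g : ↥(reesEntries P \ {1}), ∃ x : I, P μ x = (g : G) :=
    fun g => realize_single hrow hcol hhom g.2.1 hμ
  choose f hf using H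
  have hne : ∀ g : ↥(reesEntries P \ {1}), f g ≠ iI := by
    intro g h
    apply g.2.2
    have := hf g
    rw [h, hcol] at this
    exact Set.mem_singleton_iff.mpr this.symm
  refine Infinite.of_injective
    (fun g : ↥(reesEntries P \ {1}) => (⟨f g, hne g⟩ : {i : I // i ≠ iI})) ?_
  intro g₁ g₂ h
  have h' : f g₁ = f g₂ := congrArg Subtype.val h
  have h2 : P μ (f g₁) = P μ (f g₂) := by rw [h']
  rw [hf g₁, hf g₂] at h2
  exact Subtype.ext h2

lemma infinite_row (hrow : ∀ j : I, P lL j = 1) (hcol : ∀ m : Λ, P m iI = 1)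
    (hhom : IsCSHomogeneous (reesMul P) (reesInv P)) (hinf : (reesEntries P).Infinite) :
    Infinite {l : Λ // l ≠ lL} := by
  obtain ⟨ξ, hξ⟩ := exists_col_ne hcol hinf
  have hinf' : (reesEntries P \ {1}).Infinite := hinf.diff (Set.finite_singleton 1)
  haveI := hinf'.to_subtype
  have H : ∀ g : ↥(reesEntries P \ {1}), ∃ z : Λ, P z ξ = (g : G) :=
    fun g => realize_single' hrow hcol hhom g.2.1 hξ
  choose f hf using H
  have hne : ∀ g : ↥(reesEntries P \ {1}), f g ≠ lL := by
    intro g h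
    apply g.2.2
    have := hf g
    rw [h, hrow] at this
    exact Set.mem_singleton_iff.mpr this.symm
  refine Infinite.of_injective
    (fun g : ↥(reesEntries P \ {1}) => (⟨f g, hne g⟩ : {l : Λ // l ≠ lL})) ?_
  intro g₁ g₂ h
  have h' : f g₁ = f g₂ := congrArg Subtype.val h
  have h2 : P (f g₁) ξ = P (f g₂) ξ := by rw [h']
  rw [hf g₁, hf g₂] at h2
  exact Subtype.ext h2

end Entries
section Realize

variable {G I Λ : Type*} [Group G] {P : Λ → I → G} {iI : I} {lL : Λ}

lemma q_inv (hrow : ∀ j : I, P lL j = 1) (hcol : ∀ m : Λ, P m iI = 1)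
    (hhom : IsCSHomogeneous (reesMul P) (reesInv P))
    (x : I) {n : ℕ} (rows : Fin n → Λ) :
    ∃ j : I, ∀ k, P (rows k) j = (P (rows k) x)⁻¹ := by
  obtain ⟨j, hj⟩ := op2 hrow hcol hhom x iI rows
  exact ⟨j, fun k => by rw [hj k, hcol, mul_one]⟩

lemma q_mul (hrow : ∀ j : I, P lL j = 1) (hcol : ∀ m : Λ, P m iI = 1)
    (hhom : IsCSHomogeneous (reesMul P) (reesInv P))
    (x y : I) {n : ℕ} (rows : Fin n → Λ) :
    ∃ j : I, ∀ k, P (rows k) j = P (rows k) x * P (rows k) y := by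
  obtain ⟨x', hx'⟩ := q_inv hrow hcol hhom x rows
  obtain ⟨j, hj⟩ := op2 hrow hcol hhom x' y rows
  exact ⟨j, fun k => by rw [hj k, hx' k, inv_inv]⟩

lemma q_inv' (hrow : ∀ j : I, P lL j = 1) (hcol : ∀ m : Λ, P m iI = 1)
    (hhom : IsCSHomogeneous (reesMul P) (reesInv P))
    (x : Λ) {n : ℕ} (cols : Fin n → I) :
    ∃ z : Λ, ∀ k, P z (cols k) = (P x (cols k))⁻¹ := by
  obtain ⟨z, hz⟩ := op2' hrow hcol hhom x lL cols
  exact ⟨z, fun k => by rw [hz k, hrow, one_mul]⟩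

lemma q_mul' (hrow : ∀ j : I, P lL j = 1) (hcol : ∀ m : Λ, P m iI = 1)
    (hhom : IsCSHomogeneous (reesMul P) (reesInv P))
    (x y : Λ) {n : ℕ} (cols : Fin n → I) :
    ∃ z : Λ, ∀ k, P z (cols k) = P y (cols k) * P x (cols k) := by
  obtain ⟨x', hx'⟩ := q_inv' hrow hcol hhom x cols
  obtain ⟨z, hz⟩ := op2' hrow hcol hhom x' y cols
  exact ⟨z, fun k => by rw [hz k, hx' k, inv_inv]⟩

/-- The pattern `(1,…,1,d)` is realised by a column, for any entry `d`. -/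
lemma realize_one (hrow : ∀ j : I, P lL j = 1) (hcol : ∀ m : Λ, P m iI = 1)
    (hhom : IsCSHomogeneous (reesMul P) (reesInv P))
    (hΛinf : {l : Λ | l ≠ lL}.Infinite)
    {n : ℕ} (μ : Fin (n + 1) → Λ) (hμinj : Function.Injective μ)
    (hμ : ∀ k, μ k ≠ lL) {d : G} (hd : d ∈ reesEntries P) :
    ∃ j : I, (∀ k : Fin n, P (μ k.castSucc) j = 1) ∧ P (μ (Fin.last n)) j = d := by
  classical
  obtain ⟨ν, y, rfl⟩ := hd
  by_cases hν : ν = lL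
  · subst hν
    exact ⟨iI, fun k => hcol _, by rw [hcol, hrow]⟩
  · have hΛν : ({l : Λ | l ≠ lL} \ {ν}).Infinite := hΛinf.diff (Set.finite_singleton ν)
    obtain ⟨f, hfinj, hf⟩ := exists_fresh_fun hΛν (n + 1) ∅
    have hflL : ∀ k, f k ≠ lL := fun k => (hf k).1.1
    have hfν : ∀ k, f k ≠ ν := fun k => (hf k).1.2
    set s : Fin n → Λ := f ∘ Fin.castSucc with hsdef
    set r : Λ := f (Fin.last n) with hrdef
    have hsinj : Function.Injective s := hfinj.comp (Fin.castSucc_injective n)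
    have hsr : ∀ k : Fin n, s k ≠ r := fun k h =>
      absurd (hfinj h) (ne_of_lt (Fin.castSucc_lt_last k))
    have hAinj : Function.Injective (Fin.snoc s ν : Fin (n + 1) → Λ) :=
      snoc_inj hsinj (fun k h => hfν _ h)
    have hAne : ∀ k : Fin (n + 1), (Fin.snoc s ν : Fin (n + 1) → Λ) k ≠ r := by
      intro k
      induction k using Fin.lastCases with
      | last => rw [Fin.snoc_last]; exact fun h => hfν _ h.symm
      | cast k => rw [Fin.snoc_castSucc]; exact hsr k
    have hBinj : Function.Injective (Fin.snoc s lL : Fin (n + 1) → Λ) :=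
      snoc_inj hsinj (fun k h => hflL _ h)
    have hBne : ∀ k : Fin (n + 1), (Fin.snoc s lL : Fin (n + 1) → Λ) k ≠ r := by
      intro k
      induction k using Fin.lastCases with
      | last => rw [Fin.snoc_last]; exact fun h => hflL _ h.symm
      | cast k => rw [Fin.snoc_castSucc]; exact hsr k
    obtain ⟨jA, -, hjA⟩ := op1 hrow hcol hhom y (Fin.snoc s ν) r μ hAinj hAne hμinj hμ
    obtain ⟨jB, -, hjB⟩ := op1 hrow hcol hhom y (Fin.snoc s lL) r μ hBinj hBne hμinj hμ
    obtain ⟨jC, -, hjC⟩ := op1 hrow hcol hhom y f lL μ hfinj hflL hμinj hμ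
    have hjC' : ∀ k, P (μ k) jC = P (f k) y := fun k => by
      rw [hjC k, hrow, inv_one, mul_one]
    obtain ⟨j1, hj1⟩ := op2 hrow hcol hhom jB jA μ
    have hj1pre : ∀ k : Fin n, P (μ k.castSucc) j1 = 1 := by
      intro k
      rw [hj1, hjA, hjB, Fin.snoc_castSucc, Fin.snoc_castSucc, inv_mul_cancel]
    have hj1last : P (μ (Fin.last n)) j1 = P r y * (P ν y * (P r y)⁻¹) := by
      rw [hj1, hjA, hjB, Fin.snoc_last, Fin.snoc_last, hrow, one_mul, inv_inv]
    obtain ⟨jE, hjE⟩ := q_mul hrow hcol hhom j1 jC μ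
    obtain ⟨jF, hjF⟩ := op2 hrow hcol hhom jC jE μ
    refine ⟨jF, fun k => ?_, ?_⟩
    · rw [hjF, hjE, hj1pre k, one_mul, hjC', inv_mul_cancel]
    · rw [hjF, hjE, hj1last, hjC', hrdef]
      group

/-- Realisation of arbitrary entry patterns on finitely many rows of `Λ'`. -/
lemma realize_col (hrow : ∀ j : I, P lL j = 1) (hcol : ∀ m : Λ, P m iI = 1)
    (hhom : IsCSHomogeneous (reesMul P) (reesInv P)) (hinf : (reesEntries P).Infinite)
    (hΛinf : {l : Λ | l ≠ lL}.Infinite)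
    {n : ℕ} (μ : Fin n → Λ) (hμinj : Function.Injective μ) (hμ : ∀ k, μ k ≠ lL)
    (v : Fin n → G) (hv : ∀ k, v k ∈ reesEntries P) :
    ∃ i : I, ∀ k, P (μ k) i = v k := by
  induction n with
  | zero => exact ⟨iI, fun k => k.elim0⟩
  | succ m ih =>
    obtain ⟨i₀, hi₀⟩ := ih (μ ∘ Fin.castSucc) (hμinj.comp (Fin.castSucc_injective m))
      (fun k => hμ _) (v ∘ Fin.castSucc) (fun k => hv _)
    have hd : (P (μ (Fin.last m)) i₀)⁻¹ * v (Fin.last m) ∈ reesEntries P :=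
      entries_inv_mul hrow hcol hhom hinf ⟨μ (Fin.last m), i₀, rfl⟩ (hv _)
    obtain ⟨j1, hpre, hlast⟩ := realize_one hrow hcol hhom hΛinf μ hμinj hμ hd
    obtain ⟨i, hi⟩ := q_mul hrow hcol hhom i₀ j1 μ
    refine ⟨i, fun k => ?_⟩
    induction k using Fin.lastCases with
    | last =>
      rw [hi, hlast, mul_inv_cancel_left]
    | cast k =>
      rw [hi, hpre k, mul_one]
      exact hi₀ k

/-- The pattern `(1,…,1,d)` is realised by a row, for any entry `d`. -/
lemma realize_one' (hrow : ∀ j : I, P lL j = 1) (hcol : ∀ m : Λ, P m iI = 1)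
    (hhom : IsCSHomogeneous (reesMul P) (reesInv P))
    (hIinf : {i : I | i ≠ iI}.Infinite)
    {n : ℕ} (ξ : Fin (n + 1) → I) (hξinj : Function.Injective ξ)
    (hξ : ∀ k, ξ k ≠ iI) {d : G} (hd : d ∈ reesEntries P) :
    ∃ z : Λ, (∀ k : Fin n, P z (ξ k.castSucc) = 1) ∧ P z (ξ (Fin.last n)) = d := by
  classical
  obtain ⟨w, y, rfl⟩ := hd
  by_cases hy : y = iI
  · subst hy
    exact ⟨lL, fun k => hrow _, by rw [hrow, hcol]⟩
  · have hIy : ({i : I | i ≠ iI} \ {y}).Infinite := hIinf.diff (Set.finite_singleton y)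
    obtain ⟨f, hfinj, hf⟩ := exists_fresh_fun hIy (n + 1) ∅
    have hfiI : ∀ k, f k ≠ iI := fun k => (hf k).1.1
    have hfy : ∀ k, f k ≠ y := fun k => (hf k).1.2
    set s : Fin n → I := f ∘ Fin.castSucc with hsdef
    set r : I := f (Fin.last n) with hrdef
    have hsinj : Function.Injective s := hfinj.comp (Fin.castSucc_injective n)
    have hsr : ∀ k : Fin n, s k ≠ r := fun k h =>
      absurd (hfinj h) (ne_of_lt (Fin.castSucc_lt_last k))
    have hAinj : Function.Injective (Fin.snoc s y : Fin (n + 1) → I) :=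
      snoc_inj hsinj (fun k h => hfy _ h)
    have hAne : ∀ k : Fin (n + 1), (Fin.snoc s y : Fin (n + 1) → I) k ≠ r := by
      intro k
      induction k using Fin.lastCases with
      | last => rw [Fin.snoc_last]; exact fun h => hfy _ h.symm
      | cast k => rw [Fin.snoc_castSucc]; exact hsr k
    have hBinj : Function.Injective (Fin.snoc s iI : Fin (n + 1) → I) :=
      snoc_inj hsinj (fun k h => hfiI _ h)
    have hBne : ∀ k : Fin (n + 1), (Fin.snoc s iI : Fin (n + 1) → I) k ≠ r := by
      intro k
      induction k using Fin.lastCases with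
      | last => rw [Fin.snoc_last]; exact fun h => hfiI _ h.symm
      | cast k => rw [Fin.snoc_castSucc]; exact hsr k
    obtain ⟨zA, -, hzA⟩ := op1' hrow hcol hhom w (Fin.snoc s y) r ξ hAinj hAne hξinj hξ
    obtain ⟨zB, -, hzB⟩ := op1' hrow hcol hhom w (Fin.snoc s iI) r ξ hBinj hBne hξinj hξ
    obtain ⟨zC, -, hzC⟩ := op1' hrow hcol hhom w f iI ξ hfinj hfiI hξinj hξ
    have hzC' : ∀ k, P zC (ξ k) = P w (f k) := fun k => by
      rw [hzC k, hcol, inv_one, one_mul]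
    obtain ⟨z1, hz1⟩ := op2' hrow hcol hhom zB zA ξ
    have hz1pre : ∀ k : Fin n, P z1 (ξ k.castSucc) = 1 := by
      intro k
      rw [hz1, hzA, hzB, Fin.snoc_castSucc, Fin.snoc_castSucc, mul_inv_cancel]
    have hz1last : P z1 (ξ (Fin.last n)) = ((P w r)⁻¹ * P w y) * P w r := by
      rw [hz1, hzA, hzB, Fin.snoc_last, Fin.snoc_last, hcol, mul_one, inv_inv]
    obtain ⟨zE, hzE⟩ := q_mul' hrow hcol hhom z1 zC ξ
    obtain ⟨zF, hzF⟩ := op2' hrow hcol hhom zC zE ξ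
    refine ⟨zF, fun k => ?_, ?_⟩
    · rw [hzF, hzE, hz1pre k, mul_one, hzC', mul_inv_cancel]
    · rw [hzF, hzE, hz1last, hzC', hrdef]
      group

/-- Realisation of arbitrary entry patterns on finitely many columns of `I'`. -/
lemma realize_row (hrow : ∀ j : I, P lL j = 1) (hcol : ∀ m : Λ, P m iI = 1)
    (hhom : IsCSHomogeneous (reesMul P) (reesInv P)) (hinf : (reesEntries P).Infinite)
    (hIinf : {i : I | i ≠ iI}.Infinite)
    {n : ℕ} (ξ : Fin n → I) (hξinj : Function.Injective ξ) (hξ : ∀ k, ξ k ≠ iI)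
    (v : Fin n → G) (hv : ∀ k, v k ∈ reesEntries P) :
    ∃ z : Λ, ∀ k, P z (ξ k) = v k := by
  induction n with
  | zero => exact ⟨lL, fun k => k.elim0⟩
  | succ m ih =>
    obtain ⟨z₀, hz₀⟩ := ih (ξ ∘ Fin.castSucc) (hξinj.comp (Fin.castSucc_injective m))
      (fun k => hξ _) (v ∘ Fin.castSucc) (fun k => hv _)
    have hd : v (Fin.last m) * (P z₀ (ξ (Fin.last m)))⁻¹ ∈ reesEntries P :=
      entries_mul_inv hrow hcol hhom hinf ⟨z₀, ξ (Fin.last m), rfl⟩ (hv _)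
    obtain ⟨z1, hpre, hlast⟩ := realize_one' hrow hcol hhom hIinf ξ hξinj hξ hd
    obtain ⟨z, hz⟩ := q_mul' hrow hcol hhom z₀ z1 ξ
    refine ⟨z, fun k => ?_⟩
    induction k using Fin.lastCases with
    | last =>
      rw [hz, hlast, inv_mul_cancel_right]
    | cast k =>
      rw [hz, hpre k, one_mul]
      exact hz₀ k

end Realize

/-- If a normalised Rees matrix semigroup `S = M[G;I,Λ;P]` (countable
group, countable index sets) is homogeneous as a completely simple semigroup and the
entry set `G^P` is infinite, then in the induced edge-coloured bipartite graph `Γ(S)`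
(left set `Λ∖{1_Λ}`, right set `I∖{1_I}`, edge `(λ,i)` coloured `P(λ,i)`) every element
of `G^P` occurs as a colour, and `Γ(S)` is `G^P`-generic: both sides are (countably)
infinite and every finitely specified `G^P`-colour pattern is realised by a witness. -/
theorem rees_homogeneous_infinite_generic {G I Λ : Type*} [Group G] [Countable G]
    [Countable I] [Countable Λ]
    (P : Λ → I → G) (iI : I) (lL : Λ)
    (hrow : ∀ j : I, P lL j = 1) (hcol : ∀ m : Λ, P m iI = 1)
    (hhom : IsCSHomogeneous (reesMul P) (reesInv P))
    (hinf : (reesEntries P).Infinite) :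
    (∀ g ∈ reesEntries P, ∃ l : Λ, l ≠ lL ∧ ∃ i : I, i ≠ iI ∧ P l i = g) ∧
    Infinite {l : Λ // l ≠ lL} ∧ Infinite {i : I // i ≠ iI} ∧
    (∀ (A : Finset {l : Λ // l ≠ lL}) (α : {l : Λ // l ≠ lL} → G),
      (∀ a : {l : Λ // l ≠ lL}, α a ∈ reesEntries P) →
      ∃ x : {i : I // i ≠ iI}, ∀ a ∈ A, P a.1 x.1 = α a) ∧
    (∀ (B : Finset {i : I // i ≠ iI}) (β : {i : I // i ≠ iI} → G),
      (∀ b : {i : I // i ≠ iI}, β b ∈ reesEntries P) →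
      ∃ z : {l : Λ // l ≠ lL}, ∀ b ∈ B, P z.1 b.1 = β b) := by
  classical
  have hΛsub : Infinite {l : Λ // l ≠ lL} := infinite_row hrow hcol hhom hinf
  have hIsub : Infinite {i : I // i ≠ iI} := infinite_col hrow hcol hhom hinf
  have hΛinf : {l : Λ | l ≠ lL}.Infinite := Set.infinite_coe_iff.mp hΛsub
  have hIinf : {i : I | i ≠ iI}.Infinite := Set.infinite_coe_iff.mp hIsub
  obtain ⟨g0, hg0, hg0ne⟩ := exists_ne_one_entry hinf
  refine ⟨?_, hΛsub, hIsub, ?_, ?_⟩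
  · -- every entry occurs off the distinguished row and column
    intro g hg
    obtain ⟨f, hfinj, hf⟩ := exists_fresh_fun hΛinf 2 ∅
    obtain ⟨i, hi⟩ := realize_col hrow hcol hhom hinf hΛinf f hfinj
      (fun k => (hf k).1) ![g, g0] (fun k => by fin_cases k <;> simpa [hg, hg0])
    refine ⟨f 0, (hf 0).1, i, ?_, by simpa using hi 0⟩
    intro hiI
    have h1 := hi 1
    rw [hiI, hcol] at h1
    exact hg0ne (by simpa using h1.symm)
  · -- genericity: column witnesses for row patterns
    intro A α hα
    set m := A.card with hm
    set e := A.equivFin with he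
    set base : Fin m → Λ := fun k => ((e.symm k : A) : {l : Λ // l ≠ lL}).1 with hbase
    have hbase_inj : Function.Injective base := by
      intro k k' h
      exact (Equiv.injective e.symm) (Subtype.ext (Subtype.ext h))
    have hbase_ne : ∀ k, base k ≠ lL := fun k => ((e.symm k : A) : {l : Λ // l ≠ lL}).2
    have hAv : ({l : Λ | l ≠ lL} \ ↑(A.image (fun a => (a : {l : Λ // l ≠ lL}).1))).Infinite :=
      hΛinf.diff (Finset.finite_toSet _)
    obtain ⟨ex, hex1, hex2⟩ := hAv.nonempty
    have hex_ne : ∀ k, base k ≠ ex := by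
      intro k h
      apply hex2
      refine Finset.mem_coe.mpr (Finset.mem_image.mpr ⟨(e.symm k : A), ?_, h⟩)
      exact Finset.coe_mem _
    set μ : Fin (m + 1) → Λ := Fin.snoc base ex with hμdef
    have hμinj : Function.Injective μ := snoc_inj hbase_inj hex_ne
    have hμne : ∀ k, μ k ≠ lL := by
      intro k
      induction k using Fin.lastCases with
      | last => rw [hμdef]; simpa using hex1
      | cast k => rw [hμdef]; simpa using hbase_ne k
    set v : Fin (m + 1) → G := Fin.snoc (fun k => α ((e.symm k : A) : {l : Λ // l ≠ lL})) g0
      with hvdef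
    have hv : ∀ k, v k ∈ reesEntries P := by
      intro k
      induction k using Fin.lastCases with
      | last => rw [hvdef]; simpa using hg0
      | cast k => rw [hvdef]; simpa using hα _
    obtain ⟨i, hi⟩ := realize_col hrow hcol hhom hinf hΛinf μ hμinj hμne v hv
    have hiI : i ≠ iI := by
      intro h
      have hl := hi (Fin.last m)
      rw [h, hcol, hvdef] at hl
      simp only [Fin.snoc_last] at hl
      exact hg0ne hl.symm
    refine ⟨⟨i, hiI⟩, fun a ha => ?_⟩
    have hk := hi (Fin.castSucc (e ⟨a, ha⟩))
    rw [hμdef, hvdef] at hk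
    simp only [Fin.snoc_castSucc] at hk
    simpa [hbase] using hk
  · -- genericity: row witnesses for column patterns
    intro B β hβ
    set m := B.card with hm
    set e := B.equivFin with he
    set base : Fin m → I := fun k => ((e.symm k : B) : {i : I // i ≠ iI}).1 with hbase
    have hbase_inj : Function.Injective base := by
      intro k k' h
      exact (Equiv.injective e.symm) (Subtype.ext (Subtype.ext h))
    have hbase_ne : ∀ k, base k ≠ iI := fun k => ((e.symm k : B) : {i : I // i ≠ iI}).2
    have hBv : ({i : I | i ≠ iI} \ ↑(B.image (fun b => (b : {i : I // i ≠ iI}).1))).Infinite :=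
      hIinf.diff (Finset.finite_toSet _)
    obtain ⟨ex, hex1, hex2⟩ := hBv.nonempty
    have hex_ne : ∀ k, base k ≠ ex := by
      intro k h
      apply hex2
      refine Finset.mem_coe.mpr (Finset.mem_image.mpr ⟨(e.symm k : B), ?_, h⟩)
      exact Finset.coe_mem _
    set ξ : Fin (m + 1) → I := Fin.snoc base ex with hξdef
    have hξinj : Function.Injective ξ := snoc_inj hbase_inj hex_ne
    have hξne : ∀ k, ξ k ≠ iI := by
      intro k
      induction k using Fin.lastCases with
      | last => rw [hξdef]; simpa using hex1
      | cast k => rw [hξdef]; simpa using hbase_ne k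
    set v : Fin (m + 1) → G := Fin.snoc (fun k => β ((e.symm k : B) : {i : I // i ≠ iI})) g0
      with hvdef
    have hv : ∀ k, v k ∈ reesEntries P := by
      intro k
      induction k using Fin.lastCases with
      | last => rw [hvdef]; simpa using hg0
      | cast k => rw [hvdef]; simpa using hβ _
    obtain ⟨z, hz⟩ := realize_row hrow hcol hhom hinf hIinf ξ hξinj hξne v hv
    have hzL : z ≠ lL := by
      intro h
      have hl := hz (Fin.last m)
      rw [h, hrow, hvdef] at hl
      simp only [Fin.snoc_last] at hl
      exact hg0ne hl.symm
    refine ⟨⟨z, hzL⟩, fun b hb => ?_⟩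
    have hk := hz (Fin.castSucc (e ⟨b, hb⟩))
    rw [hξdef, hvdef] at hk
    simp only [Fin.snoc_castSucc] at hk
    simpa [hbase] using hk
end

section
/- Let S be a countable periodic completely simple semigroup. Then S is homogeneous as a semigroup (every isomorphism between finitely generated subsemigroups of S extends to an automorphism of S) if and only if S is homogeneous as a completely simple semigroup (every isomorphism between finitely generated completely simple subsemigroups of S extends to an automorphism of S). -/
section SemigroupDefs

variable {S : Type*} [Semigroup S]

/-- Closure of a subset of a semigroup under multiplication. -/
inductive SgClosure (X : Set S) : S → Prop
  | base {x : S} : x ∈ X → SgClosure X x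
  | mul {x y : S} : SgClosure X x → SgClosure X y → SgClosure X (x * y)

/-- Closure of a subset of a semigroup under multiplication and under the operation
`x ↦ x'` sending an element of a completely simple semigroup to its inverse in the
maximal subgroup containing it, characterised by `x·y·x = x`, `y·x·y = y`, `x·y = y·x`. -/
inductive CSgClosure (X : Set S) : S → Prop
  | base {x : S} : x ∈ X → CSgClosure X x
  | mul {x y : S} : CSgClosure X x → CSgClosure X y → CSgClosure X (x * y)
  | inv {x y : S} : CSgClosure X x → x * y * x = x → y * x * y = y → x * y = y * x →
      CSgClosure X y

end SemigroupDefs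

/-- A countable semigroup is homogeneous as a semigroup if every isomorphism between
finitely generated subsemigroups extends to an automorphism. -/
def IsHomogeneousSemigroup (S : Type*) [Semigroup S] : Prop :=
  ∀ (X Y : Finset S) (φ : S → S),
    Set.BijOn φ {s | SgClosure (X : Set S) s} {s | SgClosure (Y : Set S) s} →
    (∀ x y : S, SgClosure (X : Set S) x → SgClosure (X : Set S) y →
      φ (x * y) = φ x * φ y) →
    ∃ Φ : S → S, Function.Bijective Φ ∧ (∀ x y : S, Φ (x * y) = Φ x * Φ y) ∧
      ∀ x : S, SgClosure (X : Set S) x → Φ x = φ x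

/-- A countable completely simple semigroup is homogeneous as a completely simple
semigroup if every isomorphism between finitely generated completely simple
subsemigroups (subsemigroups closed under `x ↦ x'`) extends to an automorphism. -/
def IsCSHomogeneousSemigroup (S : Type*) [Semigroup S] : Prop :=
  ∀ (X Y : Finset S) (φ : S → S),
    Set.BijOn φ {s | CSgClosure (X : Set S) s} {s | CSgClosure (Y : Set S) s} →
    (∀ x y : S, CSgClosure (X : Set S) x → CSgClosure (X : Set S) y →
      φ (x * y) = φ x * φ y) →
    ∃ Φ : S → S, Function.Bijective Φ ∧ (∀ x y : S, Φ (x * y) = Φ x * Φ y) ∧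
      ∀ x : S, CSgClosure (X : Set S) x → Φ x = φ x

/-- A semigroup is simple if its only two-sided ideal is the whole semigroup. -/
def IsSimpleSemigroup (S : Type*) [Semigroup S] : Prop :=
  ∀ J : Set S, J.Nonempty → (∀ (s x : S), x ∈ J → s * x ∈ J ∧ x * s ∈ J) → J = Set.univ

/-- A semigroup is completely simple if it is simple and contains a primitive
idempotent. -/
def IsCompletelySimple (S : Type*) [Semigroup S] : Prop :=
  IsSimpleSemigroup S ∧
    ∃ e : S, e * e = e ∧ ∀ f : S, f * f = f → e * f = f → f * e = f → f = e

section Aux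

variable {S : Type*} [Semigroup S]

/-- `pwAux x n = x ^ (n+1)` in a semigroup. -/
def pwAux (x : S) : ℕ → S
  | 0 => x
  | n + 1 => pwAux x n * x

lemma pwAux_succ' (x : S) : ∀ n, pwAux x (n + 1) = x * pwAux x n := by
  intro n
  induction n with
  | zero => rfl
  | succ m ih => show pwAux x (m+1) * x = x * (pwAux x m * x); rw [ih, mul_assoc]

lemma pwAux_mul (x : S) (m : ℕ) : ∀ n, pwAux x m * pwAux x n = pwAux x (m + n + 1) := by
  intro n
  induction n with
  | zero => rfl
  | succ k ih =>
    show pwAux x m * (pwAux x k * x) = pwAux x (m + k + 1) * x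
    rw [← mul_assoc, ih]

lemma commAux {x y : S} (hc : x * y = y * x) : ∀ n, pwAux y n * x = x * pwAux y n := by
  intro n
  induction n with
  | zero => exact hc.symm
  | succ k ih =>
    show pwAux y k * y * x = x * (pwAux y k * y)
    rw [mul_assoc, ← hc, ← mul_assoc, ih, mul_assoc]

lemma pwAux_mul_comm {x y : S} (hc : x * y = y * x) :
    ∀ n, pwAux (x * y) n = pwAux x n * pwAux y n := by
  intro n
  induction n with
  | zero => rfl
  | succ k ih =>
    show pwAux (x*y) k * (x * y) = pwAux x k * x * (pwAux y k * y)
    rw [ih, mul_assoc (pwAux x k), ← mul_assoc (pwAux y k), commAux hc,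
      mul_assoc x, ← mul_assoc (pwAux x k), mul_assoc]

lemma pwAux_idem {e : S} (he : e * e = e) : ∀ n, pwAux e n = e := by
  intro n
  induction n with
  | zero => rfl
  | succ k ih => show pwAux e k * e = e; rw [ih, he]

lemma sgClosure_pwAux {X : Set S} {x : S} (hx : SgClosure X x) :
    ∀ n, SgClosure X (pwAux x n) := by
  intro n
  induction n with
  | zero => exact hx
  | succ k ih => exact SgClosure.mul ih hx

lemma exists_idem_pwAux {x : S}
    (hfin : {s : S | SgClosure ({x} : Set S) s}.Finite) :
    ∃ k, pwAux x k * pwAux x k = pwAux x k := by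
  have hsub : Finite ↥{s : S | SgClosure ({x} : Set S) s} := hfin.to_subtype
  have hmem : ∀ n, SgClosure ({x} : Set S) (pwAux x n) :=
    sgClosure_pwAux (SgClosure.base rfl)
  obtain ⟨a, b, hne, hab⟩ := Finite.exists_ne_map_eq_of_infinite
    (fun n : ℕ => (⟨pwAux x n, hmem n⟩ : {s : S | SgClosure ({x} : Set S) s}))
  have hab' : pwAux x a = pwAux x b := congrArg Subtype.val hab
  -- wlog i < j
  obtain ⟨i, j, hij, hpw⟩ : ∃ i j, i < j ∧ pwAux x i = pwAux x j := by
    rcases lt_or_gt_of_ne hne with h | h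
    · exact ⟨a, b, h, hab'⟩
    · exact ⟨b, a, h, hab'.symm⟩
  set p := j - i with hp
  have hp1 : 1 ≤ p := by omega
  have hstep : ∀ m, i ≤ m → pwAux x m = pwAux x (m + p) := by
    have haux : ∀ n, pwAux x (i + n) = pwAux x (i + n + p) := by
      intro n
      induction n with
      | zero =>
        show pwAux x i = pwAux x (i + p)
        rw [show i + p = j from by omega]
        exact hpw
      | succ k ih =>
        show pwAux x ((i + k) + 1) = pwAux x ((i + k) + 1 + p)
        rw [show (i + k) + 1 + p = (i + k + p) + 1 from by omega]
        show pwAux x (i + k) * x = pwAux x (i + k + p) * x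
        rw [ih]
    intro m hm
    have h1 : m = i + (m - i) := by omega
    have h2 := haux (m - i)
    rw [← h1] at h2
    exact h2
  have hmul : ∀ t m, i ≤ m → pwAux x m = pwAux x (m + t * p) := by
    intro t
    induction t with
    | zero => intro m _; rw [Nat.zero_mul, Nat.add_zero]
    | succ k ih =>
      intro m hm
      have h1 := ih m hm
      have h2 := hstep (m + k * p) (by omega)
      rw [h1, h2]
      congr 1
      have : (k+1) * p = k * p + p := by ring
      omega
  set q := (i + 1) * p with hq
  have hq1 : i + 1 ≤ q := Nat.le_mul_of_pos_right _ hp1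
  refine ⟨q - 1, ?_⟩
  rw [pwAux_mul]
  have hh := hmul (i + 1) (q - 1) (by omega)
  rw [← hq] at hh
  rw [show q - 1 + (q - 1) + 1 = q - 1 + q from by omega, ← hh]

lemma key_inverse {x y : S} (hx : x * y * x = x) (hy : y * x * y = y)
    (hc : x * y = y * x) {k : ℕ} (hk : pwAux x k * pwAux x k = pwAux x k) :
    y = pwAux x (k + k) := by
  have he : (x * y) * (x * y) = x * y := by rw [← mul_assoc, hx]
  -- step: x^{n+2} * y = x^{n+1}
  have hstep : ∀ n, pwAux x (n + 1) * y = pwAux x n := by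
    intro n
    induction n with
    | zero =>
      show x * x * y = x
      rw [mul_assoc, hc, ← mul_assoc, hx]
    | succ m ih =>
      show pwAux x (m+1) * x * y = pwAux x (m+1)
      rw [mul_assoc, hc, ← mul_assoc, ih]
      rfl
  have hB : ∀ m n, pwAux x (n + m + 1) * pwAux y m = pwAux x n := by
    intro m
    induction m with
    | zero => intro n; exact hstep n
    | succ l ih =>
      intro n
      show pwAux x (n + (l+1) + 1) * (pwAux y l * y) = pwAux x n
      have h1 : n + (l + 1) + 1 = (n + 1) + l + 1 := by omega
      rw [h1, ← mul_assoc, ih (n+1), hstep]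
  have heq : x * y = pwAux x k := by
    have h1 : x * y = pwAux (x * y) k := (pwAux_idem he k).symm
    have h2 : pwAux (x * y) k = pwAux x k * pwAux y k := pwAux_mul_comm hc k
    have h3 : pwAux x k = pwAux x (k + k + 1) := by rw [← pwAux_mul x k k, hk]
    calc x * y = pwAux x k * pwAux y k := by rw [h1, h2]
    _ = pwAux x (k + k + 1) * pwAux y k := by rw [← h3]
    _ = pwAux x k := hB k k
  have hye : y = y * (x * y) := by rw [← mul_assoc, hy]
  cases k with
  | zero =>
    show y = x
    calc y = y * (x * y) := hye
    _ = y * x := by rw [show x * y = x from heq]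
    _ = x * y := hc.symm
    _ = x := heq
  | succ m =>
    calc y = y * (x * y) := hye
    _ = y * pwAux x (m + 1) := by rw [heq]
    _ = y * (x * pwAux x m) := by rw [pwAux_succ']
    _ = (y * x) * pwAux x m := by rw [mul_assoc]
    _ = (x * y) * pwAux x m := by rw [hc]
    _ = pwAux x (m + 1) * pwAux x m := by rw [heq]
    _ = pwAux x ((m + 1) + m + 1) := pwAux_mul x (m + 1) m
    _ = pwAux x ((m + 1) + (m + 1)) := by rw [show (m+1)+m+1 = (m+1)+(m+1) from by omega]

lemma csg_eq_sg (hper : ∀ x : S, {s : S | SgClosure ({x} : Set S) s}.Finite)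
    {X : Set S} {s : S} : CSgClosure X s ↔ SgClosure X s := by
  constructor
  · intro h
    induction h with
    | base h => exact .base h
    | mul _ _ ih1 ih2 => exact .mul ih1 ih2
    | @inv a b _ hx hy hc ih =>
      obtain ⟨k, hk⟩ := exists_idem_pwAux (hper a)
      rw [key_inverse hx hy hc hk]
      exact sgClosure_pwAux ih _
  · intro h
    induction h with
    | base h => exact .base h
    | mul _ _ ih1 ih2 => exact .mul ih1 ih2

end Aux

/-- A countable periodic completely simple semigroup is homogeneous as
a semigroup if and only if it is homogeneous as a completely simple semigroup. -/
theorem periodic_cs_homogeneous_iff {S : Type*} [Semigroup S] [Countable S]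
    (hcs : IsCompletelySimple S)
    (hper : ∀ x : S, {s : S | SgClosure ({x} : Set S) s}.Finite) :
    IsHomogeneousSemigroup S ↔ IsCSHomogeneousSemigroup S := by
  have hiff : ∀ (X : Set S) (s : S), CSgClosure X s ↔ SgClosure X s :=
    fun X s => csg_eq_sg hper
  have hset : ∀ X : Set S, {s | CSgClosure X s} = {s | SgClosure X s} :=
    fun X => Set.ext fun s => hiff X s
  constructor
  · intro h X Y φ hb hm
    rw [hset (X : Set S), hset (Y : Set S)] at hb
    obtain ⟨Φ, h1, h2, h3⟩ := h X Y φ hb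
      (fun a b ha hb' => hm a b ((hiff _ _).mpr ha) ((hiff _ _).mpr hb'))
    exact ⟨Φ, h1, h2, fun a ha => h3 a ((hiff _ _).mp ha)⟩
  · intro h X Y φ hb hm
    rw [← hset (X : Set S), ← hset (Y : Set S)] at hb
    obtain ⟨Φ, h1, h2, h3⟩ := h X Y φ hb
      (fun a b ha hb' => hm a b ((hiff _ _).mp ha) ((hiff _ _).mp hb'))
    exact ⟨Φ, h1, h2, fun a ha => h3 a ((hiff _ _).mpr ha)⟩
end
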